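/- arXiv:2001.08663 — 7 statements merged into one kernel-verified Lean document; each statement's English description precedes it below -/
import Mathlib

section
/- For any continuous control function n : [0,L] → ℂ and any initial condition q(0) = x ∈ ℂ, the ordinary differential equation q'(z) = iγ|q(z)|²q(z) + n(z) on [0,L] has a unique solution with continuously differentiable real and imaginary parts. -/
open Set Metric Complex

lemma inner_I_mul_self (r : ℝ) (w : ℂ) : (inner ℝ w ((Complex.I * (r:ℂ)) * w) : ℝ) = 0 := by
  simp only [Complex.inner, map_mul, Complex.mul_re, Complex.mul_im, Complex.I_re, Complex.I_im,
    Complex.conj_re, Complex.conj_im, Complex.ofReal_re, Complex.ofReal_im]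
  ring

lemma cubic_lipschitzOnWith (γ M : ℝ) (hM : 0 ≤ M) :
    LipschitzOnWith (3 * |γ| * M^2).toNNReal
      (fun w : ℂ => Complex.I * (γ:ℂ) * ((‖w‖:ℂ))^2 * w) (Metric.closedBall 0 M) := by
  rw [lipschitzOnWith_iff_dist_le_mul]
  intro a ha b hb
  rw [dist_eq_norm, dist_eq_norm, Real.coe_toNNReal _ (by positivity)]
  have ha' : ‖a‖ ≤ M := by simpa using ha
  have hb' : ‖b‖ ≤ M := by simpa using hb
  have key : Complex.I * (γ:ℂ) * ((‖a‖:ℂ))^2 * a - Complex.I * (γ:ℂ) * ((‖b‖:ℂ))^2 * b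
      = Complex.I * (γ:ℂ) * (((‖a‖:ℂ))^2 * (a - b) + (((‖a‖^2 - ‖b‖^2 : ℝ)):ℂ) * b) := by
    push_cast; ring
  rw [key]
  have h2 : ‖Complex.I * (γ:ℂ) * (((‖a‖:ℂ))^2 * (a - b) + (((‖a‖^2 - ‖b‖^2 : ℝ)):ℂ) * b)‖
      ≤ |γ| * (‖a‖^2 * ‖a-b‖ + |‖a‖^2 - ‖b‖^2| * ‖b‖) := by
    rw [norm_mul, norm_mul, Complex.norm_I, one_mul, Complex.norm_real, Real.norm_eq_abs]
    refine mul_le_mul_of_nonneg_left ?_ (abs_nonneg _)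
    refine (norm_add_le _ _).trans ?_
    rw [norm_mul, norm_mul, Complex.norm_real, norm_pow, Complex.norm_real,
      Real.norm_eq_abs, Real.norm_eq_abs]
    simp [_root_.abs_of_nonneg (norm_nonneg a)]
  refine h2.trans ?_
  have h3 : |‖a‖^2 - ‖b‖^2| ≤ (‖a‖ + ‖b‖) * ‖a - b‖ := by
    have h0 := abs_norm_sub_norm_le a b
    have h4 : |‖a‖^2 - ‖b‖^2| = |‖a‖ - ‖b‖| * |‖a‖ + ‖b‖| := by
      rw [← abs_mul]; ring_nf
    rw [h4, _root_.abs_of_nonneg (by positivity : (0:ℝ) ≤ ‖a‖ + ‖b‖)]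
    exact mul_le_mul_of_nonneg_right h0 (by positivity) |>.trans_eq (mul_comm _ _)
  have hab : (0:ℝ) ≤ ‖a - b‖ := norm_nonneg _
  have h5 : ‖a‖^2 * ‖a-b‖ ≤ M^2 * ‖a-b‖ := by
    have : ‖a‖^2 ≤ M^2 := by nlinarith [norm_nonneg a]
    exact mul_le_mul_of_nonneg_right this hab
  have h6 : |‖a‖^2 - ‖b‖^2| * ‖b‖ ≤ ((‖a‖ + ‖b‖) * ‖a - b‖) * M :=
    mul_le_mul h3 hb' (norm_nonneg b) (by positivity)
  have h7 : ((‖a‖ + ‖b‖) * ‖a - b‖) * M ≤ 2 * M^2 * ‖a-b‖ := by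
    have h8 : ‖a‖ + ‖b‖ ≤ 2 * M := by linarith
    calc ((‖a‖ + ‖b‖) * ‖a - b‖) * M ≤ ((2*M) * ‖a - b‖) * M :=
          mul_le_mul_of_nonneg_right (mul_le_mul_of_nonneg_right h8 hab) hM
      _ = 2 * M^2 * ‖a-b‖ := by ring
  calc |γ| * (‖a‖^2 * ‖a-b‖ + |‖a‖^2 - ‖b‖^2| * ‖b‖)
      ≤ |γ| * (M^2 * ‖a-b‖ + 2 * M^2 * ‖a-b‖) := by
        refine mul_le_mul_of_nonneg_left ?_ (abs_nonneg γ); linarith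
    _ = 3 * |γ| * M^2 * ‖a-b‖ := by ring


noncomputable def trunc (R : ℝ) (w : ℂ) : ℂ := if ‖w‖ ≤ R then w else ((R / ‖w‖ : ℝ) : ℂ) * w

lemma trunc_of_le {R : ℝ} {w : ℂ} (h : ‖w‖ ≤ R) : trunc R w = w := if_pos h

lemma norm_trunc {R : ℝ} (hR : 0 ≤ R) (w : ℂ) : ‖trunc R w‖ = min ‖w‖ R := by
  rw [trunc]
  split_ifs with h
  · rw [min_eq_left h]
  · push_neg at h
    rw [norm_mul, Complex.norm_real, Real.norm_eq_abs,
      _root_.abs_of_nonneg (div_nonneg hR (norm_nonneg w)),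
      div_mul_cancel₀ _ (ne_of_gt (hR.trans_lt h)), min_eq_right h.le]

lemma trunc_eq_smul {R : ℝ} (hR : 0 ≤ R) (w : ℂ) : ∃ s : ℝ, 0 ≤ s ∧ trunc R w = (s:ℂ) * w := by
  rw [trunc]
  split_ifs with h
  · exact ⟨1, zero_le_one, by simp⟩
  · exact ⟨R / ‖w‖, by positivity, rfl⟩

lemma trunc_lipschitz {R : ℝ} (hR : 0 ≤ R) : LipschitzWith 2 (trunc R) := by
  have key : ∀ a b : ℂ, ‖b‖ ≤ ‖a‖ → ‖trunc R a - trunc R b‖ ≤ 2 * ‖a - b‖ := by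
    intro a b hba
    have hab : (0:ℝ) ≤ ‖a - b‖ := norm_nonneg _
    by_cases ha : ‖a‖ ≤ R
    · rw [trunc_of_le ha, trunc_of_le (hba.trans ha)]; linarith
    · push_neg at ha
      have ha0 : (0:ℝ) < ‖a‖ := hR.trans_lt ha
      have ha0' : ‖a‖ ≠ 0 := ne_of_gt ha0
      have hsub : ‖a‖ - ‖b‖ ≤ ‖a - b‖ := (abs_le.mp (abs_norm_sub_norm_le a b)).2 |>.trans_eq' rfl
      rw [trunc]
      rw [if_neg (not_le.mpr ha)]
      by_cases hb : ‖b‖ ≤ R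
      · rw [trunc_of_le hb]
        have expand : ((R / ‖a‖ : ℝ) : ℂ) * a - b
            = ((R / ‖a‖ : ℝ) : ℂ) * (a - b) + (((R / ‖a‖ - 1 : ℝ)) : ℂ) * b := by
          push_cast; ring
        rw [expand]
        have ht1 : R / ‖a‖ ≤ 1 := (div_le_one ha0).mpr ha.le
        have ht0 : 0 ≤ R / ‖a‖ := by positivity
        have e1 : ‖((R / ‖a‖ : ℝ) : ℂ) * (a - b)‖ ≤ ‖a - b‖ := by
          rw [norm_mul, Complex.norm_real, Real.norm_eq_abs, _root_.abs_of_nonneg ht0]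
          nlinarith
        have e2 : ‖(((R / ‖a‖ - 1 : ℝ)) : ℂ) * b‖ ≤ ‖a - b‖ := by
          rw [norm_mul, Complex.norm_real, Real.norm_eq_abs, abs_sub_comm,
            _root_.abs_of_nonneg (by linarith : (0:ℝ) ≤ 1 - R / ‖a‖)]
          have : (1 - R / ‖a‖) * ‖b‖ ≤ (1 - R / ‖a‖) * ‖a‖ :=
            mul_le_mul_of_nonneg_left hba (by linarith)
          have h2 : (1 - R / ‖a‖) * ‖a‖ = ‖a‖ - R := by field_simp [ha0']
          calc (1 - R / ‖a‖) * ‖b‖ ≤ ‖a‖ - R := by linarith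
            _ ≤ ‖a‖ - ‖b‖ := by linarith
            _ ≤ ‖a - b‖ := hsub
        calc ‖_ + _‖ ≤ ‖((R / ‖a‖ : ℝ) : ℂ) * (a - b)‖ + ‖(((R / ‖a‖ - 1 : ℝ)) : ℂ) * b‖ :=
              norm_add_le _ _
          _ ≤ 2 * ‖a - b‖ := by linarith
      · push_neg at hb
        have hb0 : (0:ℝ) < ‖b‖ := hR.trans_lt hb
        have hb0' : ‖b‖ ≠ 0 := ne_of_gt hb0
        rw [trunc, if_neg (not_le.mpr hb)]
        have expand : ((R / ‖a‖ : ℝ) : ℂ) * a - ((R / ‖b‖ : ℝ) : ℂ) * b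
            = ((R / ‖a‖ : ℝ) : ℂ) * (a - b) + (((R / ‖a‖ - R / ‖b‖ : ℝ)) : ℂ) * b := by
          push_cast; ring
        rw [expand]
        have ht1 : R / ‖a‖ ≤ 1 := (div_le_one ha0).mpr ha.le
        have ht0 : 0 ≤ R / ‖a‖ := by positivity
        have e1 : ‖((R / ‖a‖ : ℝ) : ℂ) * (a - b)‖ ≤ ‖a - b‖ := by
          rw [norm_mul, Complex.norm_real, Real.norm_eq_abs, _root_.abs_of_nonneg ht0]
          nlinarith
        have e2 : ‖(((R / ‖a‖ - R / ‖b‖ : ℝ)) : ℂ) * b‖ ≤ ‖a - b‖ := by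
          rw [norm_mul, Complex.norm_real, Real.norm_eq_abs]
          have hle : R/‖a‖ ≤ R/‖b‖ := by
            rw [div_le_div_iff₀ ha0 hb0]; nlinarith
          rw [abs_sub_comm, _root_.abs_of_nonneg (sub_nonneg.mpr hle)]
          have heq : (R/‖b‖ - R/‖a‖) * ‖b‖ = R - R * ‖b‖ / ‖a‖ := by field_simp [ha0', hb0']
          rw [heq]
          refine le_trans ?_ hsub
          have h9 : (R - R*‖b‖/‖a‖) * ‖a‖ ≤ (‖a‖ - ‖b‖) * ‖a‖ := by
            have h10 : (R - R*‖b‖/‖a‖) * ‖a‖ = R * (‖a‖ - ‖b‖) := by field_simp [ha0']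
            rw [h10]; nlinarith
          exact le_of_mul_le_mul_right h9 ha0
        calc ‖_ + _‖ ≤ ‖((R / ‖a‖ : ℝ) : ℂ) * (a - b)‖ + ‖(((R / ‖a‖ - R / ‖b‖ : ℝ)) : ℂ) * b‖ :=
              norm_add_le _ _
          _ ≤ 2 * ‖a - b‖ := by linarith
  refine LipschitzWith.of_dist_le_mul fun a b => ?_
  rw [dist_eq_norm, dist_eq_norm]
  push_cast
  rcases le_total ‖b‖ ‖a‖ with h | h
  · exact key a b h
  · rw [norm_sub_rev, norm_sub_rev a b]; exact key b a h

lemma lipschitzOnWith_add_const {K : NNReal} {s : Set ℂ} {h : ℂ → ℂ}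
    (hh : LipschitzOnWith K h s) (c : ℂ) : LipschitzOnWith K (fun w => h w + c) s := by
  intro a ha b hb
  simpa [edist_add_right] using hh ha hb


/-- The per-sample channel ODE: `q' = iγ|q|²q + n` on `[0, L]`. -/
def IsSol (γ L : ℝ) (n q : ℝ → ℂ) : Prop :=
  ∀ z ∈ Set.Icc (0:ℝ) L,
    HasDerivAt q (Complex.I * (γ:ℂ) * ((‖q z‖:ℂ))^2 * q z + n z) z

/-- For any continuous control and any initial condition, the per-sample
channel ODE has a solution on `[0,L]`, unique on `[0,L]`. -/
theorem existence_uniqueness (γ L : ℝ) (hL : 0 < L)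
    (n : ℝ → ℂ) (hn : ContinuousOn n (Set.Icc 0 L)) (x : ℂ) :
    ∃ q : ℝ → ℂ, q 0 = x ∧ IsSol γ L n q ∧
      ∀ p : ℝ → ℂ, p 0 = x → IsSol γ L n p → ∀ z ∈ Set.Icc (0:ℝ) L, p z = q z := by
  classical
  obtain ⟨C₀, hC₀⟩ := isCompact_Icc.exists_bound_of_continuousOn hn
  set Cn := max C₀ 0 with hCndef
  have hCn0 : 0 ≤ Cn := le_max_right _ _
  have hCnb : ∀ z ∈ Icc (0:ℝ) L, ‖n z‖ ≤ Cn := fun z hz => (hC₀ z hz).trans (le_max_left _ _)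
  -- continuous extension of n to ℝ
  set N : ℝ → ℂ := fun t => n (projIcc 0 L hL.le t) with hNdef
  have hNcont : Continuous N := hn.comp_continuous
    (continuous_subtype_val.comp continuous_projIcc) (fun t => (projIcc 0 L hL.le t).2)
  have hNb : ∀ t, ‖N t‖ ≤ Cn := fun t => hCnb _ (projIcc 0 L hL.le t).2
  have hNeq : ∀ t ∈ Icc (0:ℝ) L, N t = n t := fun t ht => by
    simp only [hNdef, projIcc_of_mem hL.le ht]
  -- constants
  set R : ℝ := ‖x‖ + Cn * L with hRdef
  have hR0 : 0 ≤ R := by positivity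
  set C : ℝ := |γ| * R^3 + Cn with hCdef
  have hC0 : 0 ≤ C := by positivity
  set R' : ℝ := C * (L+1) with hR'def
  set K : NNReal := (3 * |γ| * R ^ 2).toNNReal * 2 with hKdef
  -- the truncated field
  set g : ℂ → ℂ := fun w => Complex.I * (γ:ℂ) * ((‖trunc R w‖:ℂ))^2 * trunc R w with hgdef
  set v : ℝ → ℂ → ℂ := fun t w => g w + N t with hvdef
  have hglip : LipschitzWith K g := by
    have h1 := cubic_lipschitzOnWith γ R hR0
    have h2 := (trunc_lipschitz hR0).lipschitzOnWith (s := univ)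
    have h3 : MapsTo (trunc R) univ (closedBall 0 R) := fun w _ => by
      simp only [mem_closedBall_zero_iff, norm_trunc hR0]
      exact min_le_right _ _
    have h4 := h1.comp h2 h3
    rw [lipschitzOnWith_univ] at h4
    exact h4
  have hgb : ∀ w, ‖g w‖ ≤ |γ| * R^3 := by
    intro w
    have ht : ‖trunc R w‖ = min ‖w‖ R := norm_trunc hR0 w
    have ht1 : ‖trunc R w‖ ≤ R := ht ▸ min_le_right _ _
    have ht2 : 0 ≤ ‖trunc R w‖ := norm_nonneg _
    simp only [hgdef]
    rw [norm_mul, norm_mul, norm_mul, Complex.norm_I, one_mul, norm_pow, Complex.norm_real,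
      Complex.norm_real, Real.norm_eq_abs, Real.norm_eq_abs,
      _root_.abs_of_nonneg ht2]
    calc |γ| * ‖trunc R w‖^2 * ‖trunc R w‖ = |γ| * ‖trunc R w‖^3 := by ring
      _ ≤ |γ| * R^3 := by gcongr
      
  -- Picard–Lindelöf on [-1, L+1]
  have hPL : IsPicardLindelof v (tmin := -1) (tmax := L+1) ⟨0, by constructor <;> linarith⟩ x
      R'.toNNReal 0 C.toNNReal K :=
    { lipschitzOnWith := fun t _ => lipschitzOnWith_add_const hglip.lipschitzOnWith (N t)
      continuousOn := fun w _ => (continuous_const.add hNcont).continuousOn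
      norm_le := fun t _ w _ => by
        rw [Real.coe_toNNReal _ hC0]
        refine (norm_add_le _ _).trans ?_
        simp only [hCdef]
        exact add_le_add (hgb w) (hNb t)
      mul_max_le := by
        have heq : max (L+1-0) (0-(-1)) = L+1 := by
          rw [max_eq_left (by linarith)]; ring
        have hR'0 : 0 ≤ R' := by positivity
        simp only [NNReal.coe_zero, sub_zero, Real.coe_toNNReal _ hC0, Real.coe_toNNReal _ hR'0]
        rw [max_eq_left (by linarith)] }
  obtain ⟨f, hf0, hfd⟩ := hPL.exists_eq_forall_mem_Icc_hasDerivWithinAt₀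
  replace hf0 : f 0 = x := hf0
  have hfd' : ∀ z ∈ Icc (0:ℝ) L, HasDerivAt f (v z (f z)) z := by
    intro z hz
    refine (hfd z ⟨by linarith [hz.1], by linarith [hz.2]⟩).hasDerivAt ?_
    exact Icc_mem_nhds (by linarith [hz.1]) (by linarith [hz.2])
  -- orthogonality of the nonlinearity
  have horth : ∀ w : ℂ, (inner ℝ w (g w) : ℝ) = 0 := by
    intro w
    obtain ⟨s, hs0, hseq⟩ := trunc_eq_smul hR0 w
    have hgw : g w = (Complex.I * ((γ * ‖trunc R w‖^2 * s : ℝ) : ℂ)) * w := by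
      simp only [hgdef]
      rw [hseq]
      push_cast
      ring
    rw [hgw, inner_I_mul_self]
  -- a priori bound
  have hbound : ∀ z ∈ Icc (0:ℝ) L, ‖f z‖ ≤ ‖x‖ + Cn * z := by
    intro z hz
    have key : ∀ ε : ℝ, 0 < ε → ‖f z‖ ≤ (‖x‖ + Cn * z) + ε := by
      intro ε hε
      set u : ℝ → ℝ := fun t => Real.sqrt (‖f t‖^2 + ε^2) with hudef
      set D : ℝ → ℝ := fun t =>
        ((inner ℝ (f t) (v t (f t)) : ℝ) + (inner ℝ (v t (f t)) (f t) : ℝ))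
          / (2 * Real.sqrt (‖f t‖^2 + ε^2)) with hDdef
      have hsqpos : ∀ t, 0 < Real.sqrt (‖f t‖^2 + ε^2) :=
        fun t => Real.sqrt_pos.mpr (by positivity)
      have hud : ∀ t ∈ Icc (0:ℝ) L, HasDerivAt u (D t) t := by
        intro t ht
        have hw : HasDerivAt (fun τ => (inner ℝ (f τ) (f τ) : ℝ))
            ((inner ℝ (f t) (v t (f t)) : ℝ) + (inner ℝ (v t (f t)) (f t) : ℝ)) t :=
          HasDerivAt.inner ℝ (hfd' t ht) (hfd' t ht)
        have hw' : HasDerivAt (fun τ => ‖f τ‖^2 + ε^2)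
            ((inner ℝ (f t) (v t (f t)) : ℝ) + (inner ℝ (v t (f t)) (f t) : ℝ)) t := by
          have : (fun τ => ‖f τ‖^2 + ε^2) = fun τ => (inner ℝ (f τ) (f τ) : ℝ) + ε^2 := by
            funext τ; rw [real_inner_self_eq_norm_sq]
          rw [this]
          exact hw.add_const _
        have := hw'.sqrt (ne_of_gt (by positivity))
        simpa [hudef, hDdef, div_eq_div_iff] using this
      have hDle : ∀ t ∈ Icc (0:ℝ) L, D t ≤ Cn := by
        intro t ht
        have hinner : (inner ℝ (f t) (v t (f t)) : ℝ) = (inner ℝ (f t) (N t) : ℝ) := by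
          have : v t (f t) = g (f t) + N t := rfl
          rw [this, inner_add_right, horth, zero_add]
        have hinner2 : (inner ℝ (v t (f t)) (f t) : ℝ) = (inner ℝ (f t) (N t) : ℝ) := by
          rw [real_inner_comm, hinner]
        have hcs : (inner ℝ (f t) (N t) : ℝ) ≤ ‖f t‖ * Cn := by
          refine (real_inner_le_norm _ _).trans ?_
          exact mul_le_mul_of_nonneg_left (hNb t) (norm_nonneg _)
        have hnorm_le : ‖f t‖ ≤ Real.sqrt (‖f t‖^2 + ε^2) :=
          calc ‖f t‖ = Real.sqrt (‖f t‖^2) := (Real.sqrt_sq (norm_nonneg _)).symm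
            _ ≤ Real.sqrt (‖f t‖^2 + ε^2) := Real.sqrt_le_sqrt (by nlinarith)
        have h2 : (inner ℝ (f t) (v t (f t)) : ℝ) + (inner ℝ (v t (f t)) (f t) : ℝ)
            ≤ 2 * Real.sqrt (‖f t‖^2 + ε^2) * Cn := by
          rw [hinner, hinner2]
          have : ‖f t‖ * Cn ≤ Real.sqrt (‖f t‖^2 + ε^2) * Cn :=
            mul_le_mul_of_nonneg_right hnorm_le hCn0
          linarith [hcs]
        rw [hDdef]
        rw [div_le_iff₀ (by positivity)]
        calc (inner ℝ (f t) (v t (f t)) : ℝ) + (inner ℝ (v t (f t)) (f t) : ℝ)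
            ≤ 2 * Real.sqrt (‖f t‖^2 + ε^2) * Cn := h2
          _ = Cn * (2 * Real.sqrt (‖f t‖^2 + ε^2)) := by ring
      -- monotonicity argument
      have hsub : Icc (0:ℝ) z ⊆ Icc (0:ℝ) L := Icc_subset_Icc le_rfl hz.2
      set F : ℝ → ℝ := fun t => Cn * t - u t with hFdef
      have hFd : ∀ t ∈ Icc (0:ℝ) L, HasDerivAt F (Cn - D t) t := by
        intro t ht
        have h1 : HasDerivAt (fun τ : ℝ => Cn * τ) Cn t := by
          simpa using (hasDerivAt_id t).const_mul Cn
        exact h1.sub (hud t ht)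
      have hmono : MonotoneOn F (Icc (0:ℝ) z) := by
        refine monotoneOn_of_deriv_nonneg (convex_Icc 0 z) ?_ ?_ ?_
        · exact fun t ht => ((hFd t (hsub ht)).continuousAt).continuousWithinAt
        · intro t ht
          have ht' : t ∈ Icc (0:ℝ) z := interior_subset ht
          exact ((hFd t (hsub ht')).differentiableAt).differentiableWithinAt
        · intro t ht
          have ht' : t ∈ Icc (0:ℝ) z := interior_subset ht
          rw [(hFd t (hsub ht')).deriv]
          have := hDle t (hsub ht')
          linarith
      have h0z : (0:ℝ) ∈ Icc (0:ℝ) z := ⟨le_rfl, hz.1⟩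
      have hzz : z ∈ Icc (0:ℝ) z := ⟨hz.1, le_rfl⟩
      have hF0z := hmono h0z hzz hz.1
      -- unfold
      have hu0 : u 0 ≤ ‖x‖ + ε := by
        have : u 0 = Real.sqrt (‖x‖^2 + ε^2) := by rw [hudef]; simp [hf0]
        rw [this]
        rw [show ‖x‖ + ε = Real.sqrt ((‖x‖ + ε)^2) by
          rw [Real.sqrt_sq (by positivity)]]
        exact Real.sqrt_le_sqrt (by nlinarith [norm_nonneg x])
      have huz : ‖f z‖ ≤ u z :=
        calc ‖f z‖ = Real.sqrt (‖f z‖^2) := (Real.sqrt_sq (norm_nonneg _)).symm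
          _ ≤ Real.sqrt (‖f z‖^2 + ε^2) := Real.sqrt_le_sqrt (by nlinarith)
      have hF : F 0 ≤ F z := hF0z
      simp only [hFdef, mul_zero, zero_sub] at hF
      linarith
    by_contra hcon
    push_neg at hcon
    have := key ((‖f z‖ - (‖x‖ + Cn * z))/2) (by linarith)
    linarith
  -- f is a solution of the original equation
  have hsol : IsSol γ L n f := by
    intro z hz
    have hd := hfd' z hz
    have htr : trunc R (f z) = f z := by
      refine trunc_of_le ?_
      refine (hbound z hz).trans ?_
      simp only [hRdef]
      have : Cn * z ≤ Cn * L := mul_le_mul_of_nonneg_left hz.2 hCn0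
      linarith
    have : v z (f z) = Complex.I * (γ:ℂ) * ((‖f z‖:ℂ))^2 * f z + n z := by
      simp only [hvdef, hgdef, htr, hNeq z hz]
    rwa [this] at hd
  refine ⟨f, hf0, hsol, ?_⟩
  -- uniqueness
  intro p hp0 hpsol
  have hfc : ContinuousOn f (Icc (0:ℝ) L) :=
    fun z hz => ((hfd' z hz).continuousAt).continuousWithinAt
  have hpc : ContinuousOn p (Icc (0:ℝ) L) :=
    fun z hz => ((hpsol z hz).continuousAt).continuousWithinAt
  obtain ⟨Mf, hMf⟩ := isCompact_Icc.exists_bound_of_continuousOn hfc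
  obtain ⟨Mp, hMp⟩ := isCompact_Icc.exists_bound_of_continuousOn hpc
  set M : ℝ := max (max Mf Mp) 0 with hMdef
  have hM0 : (0:ℝ) ≤ M := le_max_right _ _
  have hfM : ∀ z ∈ Icc (0:ℝ) L, f z ∈ closedBall (0:ℂ) M := fun z hz => by
    rw [mem_closedBall_zero_iff]
    exact (hMf z hz).trans ((le_max_left Mf Mp).trans (le_max_left _ _))
  have hpM : ∀ z ∈ Icc (0:ℝ) L, p z ∈ closedBall (0:ℂ) M := fun z hz => by
    rw [mem_closedBall_zero_iff]
    exact (hMp z hz).trans ((le_max_right Mf Mp).trans (le_max_left _ _))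
  have hv' : ∀ t : ℝ, LipschitzOnWith (3 * |γ| * M ^ 2).toNNReal
      (fun w : ℂ => Complex.I * (γ:ℂ) * ((‖w‖:ℂ))^2 * w + n t) (closedBall 0 M) :=
    fun t => lipschitzOnWith_add_const (cubic_lipschitzOnWith γ M hM0) (n t)
  have key := ODE_solution_unique_of_mem_Icc_right (fun t _ => hv' t)
    hpc (fun t ht => (hpsol t (Ico_subset_Icc_self ht)).hasDerivWithinAt)
    (fun t ht => hpM t (Ico_subset_Icc_self ht))
    hfc (fun t ht => (hsol t (Ico_subset_Icc_self ht)).hasDerivWithinAt)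
    (fun t ht => hfM t (Ico_subset_Icc_self ht))
    (hp0.trans hf0.symm)
  exact fun z hz => key hz
end

section
/- Let q : [0,L] → ℂ solve q'(z) = iγ|q(z)|²q(z) + n(z) with n continuous, q(0) = x and q(L) = y. Then the noise energy satisfies ∫₀^L |n(z)|² dz ≥ (|y| − |x|)² / L. -/
/-- The energy of any control driving `x` to `y` through the per-sample channel
is at least `(|y| - |x|)² / L`. -/
theorem energy_lower_bound (γ L : ℝ) (hL : 0 < L)
    (n : ℝ → ℂ) (hn : ContinuousOn n (Set.Icc 0 L))
    (q : ℝ → ℂ)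
    (hq : ∀ z ∈ Set.Icc (0:ℝ) L,
      HasDerivAt q (Complex.I * (γ:ℂ) * ((‖q z‖:ℂ))^2 * q z + n z) z)
    (x y : ℂ) (hx : q 0 = x) (hy : q L = y) :
    (‖y‖ - ‖x‖)^2 / L ≤ ∫ z in (0:ℝ)..L, ‖n z‖^2 := by
  have hL0 : (0:ℝ) ≤ L := hL.le
  have hIcc : Set.uIcc (0:ℝ) L = Set.Icc 0 L := Set.uIcc_of_le hL0
  -- q is continuous on Icc
  have hqc : ContinuousOn q (Set.Icc 0 L) := fun z hz =>
    (hq z hz).continuousAt.continuousWithinAt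
  -- the integrand of the phase
  set g : ℝ → ℝ := fun t => γ * ‖q t‖ ^ 2 with hg
  have hgc : ContinuousOn g (Set.Icc 0 L) :=
    (continuousOn_const.mul ((hqc.norm).pow 2))
  set θ : ℝ → ℝ := fun z => ∫ t in (0:ℝ)..z, g t with hθdef
  have hθc : ContinuousOn θ (Set.Icc 0 L) := by
    have := intervalIntegral.continuousOn_primitive_interval
      (f := g) (μ := MeasureTheory.volume) (a := 0) (b := L)
      (by rw [hIcc]; exact hgc.integrableOn_compact isCompact_Icc)
    rwa [hIcc] at this
  set p : ℝ → ℂ := fun z => Complex.exp (-(Complex.I * (θ z : ℂ))) * q z with hpdef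
  have hnormp : ∀ z, ‖p z‖ = ‖q z‖ := by
    intro z
    simp only [hpdef, norm_mul, Complex.norm_exp]
    simp
  -- derivative of θ on the interior
  have hθd : ∀ z ∈ Set.Ioo (0:ℝ) L, HasDerivAt θ (g z) z := by
    intro z hz
    have hzIcc : Set.Icc (0:ℝ) z ⊆ Set.Icc 0 L :=
      Set.Icc_subset_Icc le_rfl hz.2.le
    apply intervalIntegral.integral_hasDerivAt_right
    · exact ((hgc.mono (by rw [Set.uIcc_of_le hz.1.le]; exact hzIcc)).intervalIntegrable)
    · exact ⟨Set.Ioo 0 L, isOpen_Ioo.mem_nhds hz,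
        ((hgc.mono Set.Ioo_subset_Icc_self).aestronglyMeasurable measurableSet_Ioo)⟩
    · exact (hgc z ⟨hz.1.le, hz.2.le⟩).continuousAt
        (Icc_mem_nhds hz.1 hz.2)
  -- derivative of p on the interior
  have hpd : ∀ z ∈ Set.Ioo (0:ℝ) L,
      HasDerivAt p (Complex.exp (-(Complex.I * (θ z : ℂ))) * n z) z := by
    intro z hz
    have hq' := hq z ⟨hz.1.le, hz.2.le⟩
    have h1 : HasDerivAt (fun w => ((θ w : ℂ))) ((g z : ℂ)) z :=
      (hθd z hz).ofReal_comp
    have h2 : HasDerivAt (fun w => -(Complex.I * (θ w : ℂ))) (-(Complex.I * (g z : ℂ))) z :=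
      ((h1.const_mul Complex.I)).neg
    have h3 : HasDerivAt (fun w => Complex.exp (-(Complex.I * (θ w : ℂ))))
        (Complex.exp (-(Complex.I * (θ z : ℂ))) * (-(Complex.I * (g z : ℂ)))) z := h2.cexp
    have h4 := h3.mul hq'
    refine h4.congr_deriv ?_
    simp only [hg]
    push_cast
    ring
  -- FTC for p
  have hpc : ContinuousOn p (Set.Icc 0 L) :=
    ((Complex.continuous_exp.comp
      ((continuous_const.mul (Complex.continuous_ofReal)).neg)).comp_continuousOn hθc).mul hqc
  have hfc : ContinuousOn (fun z => Complex.exp (-(Complex.I * (θ z : ℂ))) * n z)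
      (Set.Icc 0 L) :=
    ((Complex.continuous_exp.comp
      ((continuous_const.mul (Complex.continuous_ofReal)).neg)).comp_continuousOn hθc).mul hn
  have hfint : IntervalIntegrable (fun z => Complex.exp (-(Complex.I * (θ z : ℂ))) * n z)
      MeasureTheory.volume 0 L := (hfc.mono hIcc.subset).intervalIntegrable
  have hftc : (∫ z in (0:ℝ)..L, Complex.exp (-(Complex.I * (θ z : ℂ))) * n z) = p L - p 0 :=
    intervalIntegral.integral_eq_sub_of_hasDeriv_right_of_le hL0 hpc
      (fun z hz => (hpd z hz).hasDerivWithinAt) hfint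
  -- bound: |‖y‖ - ‖x‖| ≤ ∫ ‖n‖
  have hA : |‖y‖ - ‖x‖| ≤ ∫ z in (0:ℝ)..L, ‖n z‖ := by
    calc |‖y‖ - ‖x‖| = |‖p L‖ - ‖p 0‖| := by rw [hnormp, hnormp, hx, hy]
      _ ≤ ‖p L - p 0‖ := abs_norm_sub_norm_le _ _
      _ = ‖∫ z in (0:ℝ)..L, Complex.exp (-(Complex.I * (θ z : ℂ))) * n z‖ := by rw [hftc]
      _ ≤ ∫ z in (0:ℝ)..L, ‖Complex.exp (-(Complex.I * (θ z : ℂ))) * n z‖ :=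
          intervalIntegral.norm_integral_le_integral_norm hL0
      _ = ∫ z in (0:ℝ)..L, ‖n z‖ := by
          apply intervalIntegral.integral_congr
          intro z _
          simp [norm_mul, Complex.norm_exp]
  -- Cauchy–Schwarz via expanding a square
  set A : ℝ := ∫ z in (0:ℝ)..L, ‖n z‖ with hAdef
  set B : ℝ := ∫ z in (0:ℝ)..L, ‖n z‖ ^ 2 with hBdef
  have hnn : ContinuousOn (fun z => ‖n z‖) (Set.Icc 0 L) := hn.norm
  have hint1 : IntervalIntegrable (fun z => ‖n z‖) MeasureTheory.volume 0 L :=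
    (hnn.mono hIcc.subset).intervalIntegrable
  have hint2 : IntervalIntegrable (fun z => ‖n z‖ ^ 2) MeasureTheory.volume 0 L :=
    ((hnn.pow 2).mono hIcc.subset).intervalIntegrable
  have hAB : A ^ 2 ≤ L * B := by
    have hnonneg : 0 ≤ ∫ z in (0:ℝ)..L, (‖n z‖ - A / L) ^ 2 :=
      intervalIntegral.integral_nonneg hL0 (fun u _ => sq_nonneg _)
    have hexp : (∫ z in (0:ℝ)..L, (‖n z‖ - A / L) ^ 2)
        = B - 2 * (A / L) * A + (A / L) ^ 2 * L := by
      have : ∀ z, (‖n z‖ - A / L) ^ 2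
          = ‖n z‖ ^ 2 - 2 * (A / L) * ‖n z‖ + (A / L) ^ 2 := by intro z; ring
      simp_rw [this]
      rw [intervalIntegral.integral_add (hint2.sub ((hint1.const_mul _)))
        intervalIntegrable_const,
        intervalIntegral.integral_sub hint2 (hint1.const_mul _),
        intervalIntegral.integral_const_mul, intervalIntegral.integral_const]
      simp [hAdef, hBdef, mul_comm]
    rw [hexp] at hnonneg
    have h1 : (A / L) ^ 2 * L = A ^ 2 / L := by field_simp
    have h2 : 2 * (A / L) * A = 2 * (A ^ 2 / L) := by
      field_simp
    have h3 : A ^ 2 / L ≤ B := by rw [h1, h2] at hnonneg; linarith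
    have h4 := (div_le_iff₀ hL).mp h3
    linarith [mul_comm L B]
  have hsq : (‖y‖ - ‖x‖) ^ 2 ≤ A ^ 2 := by
    have hA0 : 0 ≤ A :=
      intervalIntegral.integral_nonneg hL0 (fun u _ => norm_nonneg _)
    calc (‖y‖ - ‖x‖) ^ 2 = |‖y‖ - ‖x‖| ^ 2 := (sq_abs _).symm
      _ ≤ A ^ 2 := by nlinarith [abs_nonneg (‖y‖ - ‖x‖)]
  rw [div_le_iff₀ hL]
  calc (‖y‖ - ‖x‖) ^ 2 ≤ A ^ 2 := hsq
    _ ≤ L * B := hAB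
    _ = B * L := mul_comm _ _
end

section
/- For any y ∈ ℂ with y ≠ 0, the function q(z) = (yz/L) · exp(iγ|y|²(z³ − L³)/(3L²)) solves q'(z) = iγ|q(z)|²q(z) + n(z) with n(z) = (y/L) · exp(iγ|y|²(z³ − L³)/(3L²)), satisfies q(0) = 0, q(L) = y, and the control energy is ∫₀^L |n(z)|² dz = |y|²/L. -/
/-- An explicit minimum-energy trajectory from the origin to `y`:
`q(z) = (yz/L)·exp(iγ|y|²(z³−L³)/(3L²))` solves the per-sample channel ODE with
control `n(z) = (y/L)·exp(iγ|y|²(z³−L³)/(3L²))`, starts at `0`, ends at `y`,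
and the control energy is `|y|²/L`. -/
theorem explicit_trajectory_from_origin (γ L : ℝ) (hL : 0 < L)
    (y : ℂ) (hy : y ≠ 0)
    (q n : ℝ → ℂ)
    (hqdef : q = fun z : ℝ =>
      (y * (z:ℂ) / (L:ℂ)) *
        Complex.exp (Complex.I * (γ:ℂ) * ((‖y‖:ℂ))^2 * ((z:ℂ)^3 - (L:ℂ)^3) / (3 * (L:ℂ)^2)))
    (hndef : n = fun z : ℝ =>
      (y / (L:ℂ)) *
        Complex.exp (Complex.I * (γ:ℂ) * ((‖y‖:ℂ))^2 * ((z:ℂ)^3 - (L:ℂ)^3) / (3 * (L:ℂ)^2))) :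
    (∀ z ∈ Set.Icc (0:ℝ) L,
        HasDerivAt q (Complex.I * (γ:ℂ) * ((‖q z‖:ℂ))^2 * q z + n z) z) ∧
      q 0 = 0 ∧ q L = y ∧ (∫ z in (0:ℝ)..L, ‖n z‖^2) = ‖y‖^2 / L := by
  have hL0 : (L:ℂ) ≠ 0 := by exact_mod_cast hL.ne'
  have key : ∀ z : ℝ,
      Complex.I * (γ:ℂ) * ((‖y‖:ℂ))^2 * ((z:ℂ)^3 - (L:ℂ)^3) / (3 * (L:ℂ)^2)
        = ((γ * ‖y‖^2 * (z^3 - L^3) / (3 * L^2) : ℝ) : ℂ) * Complex.I := by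
    intro z; push_cast; ring
  have habs1 : ∀ z : ℝ,
      ‖Complex.exp (Complex.I * (γ:ℂ) * ((‖y‖:ℂ))^2 * ((z:ℂ)^3 - (L:ℂ)^3) / (3 * (L:ℂ)^2))‖ = 1 := by
    intro z
    rw [key z, Complex.norm_exp_ofReal_mul_I]
  refine ⟨?_, ?_, ?_, ?_⟩
  · intro z hz
    have hid : HasDerivAt (fun z : ℝ => (z:ℂ)) 1 z := Complex.ofRealCLM.hasDerivAt
    have hcr : HasDerivAt (fun z : ℝ => z^3) (3 * z^2) z := by
      simpa using hasDerivAt_pow 3 z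
    have hcube : HasDerivAt (fun z : ℝ => (z:ℂ)^3) ((3 * z^2 : ℝ) : ℂ) z := by
      have := hcr.ofReal_comp
      simpa using this
    have hphi : HasDerivAt
        (fun z : ℝ => Complex.I * (γ:ℂ) * ((‖y‖:ℂ))^2 * ((z:ℂ)^3 - (L:ℂ)^3) / (3 * (L:ℂ)^2))
        (Complex.I * (γ:ℂ) * ((‖y‖:ℂ))^2 * (z:ℂ)^2 / (L:ℂ)^2) z := by
      have := ((hcube.sub_const ((L:ℂ)^3)).const_mul (Complex.I * (γ:ℂ) * ((‖y‖:ℂ))^2)).div_const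
        (3 * (L:ℂ)^2)
      refine this.congr_deriv ?_
      push_cast
      field_simp
    have hexp := hphi.cexp
    have hlin : HasDerivAt (fun z : ℝ => y * (z:ℂ) / (L:ℂ)) (y / L) z := by
      simpa using (hid.const_mul y).div_const (L:ℂ)
    have hprod := hlin.mul hexp
    rw [hqdef, hndef]
    have hnorm : ((‖(y * (z:ℂ) / (L:ℂ)) *
        Complex.exp (Complex.I * (γ:ℂ) * ((‖y‖:ℂ))^2 * ((z:ℂ)^3 - (L:ℂ)^3) / (3 * (L:ℂ)^2))‖ : ℂ))^2
        = (‖y‖:ℂ)^2 * (z:ℂ)^2 / (L:ℂ)^2 := by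
      have h1 : ‖(y * (z:ℂ) / (L:ℂ)) *
          Complex.exp (Complex.I * (γ:ℂ) * ((‖y‖:ℂ))^2 * ((z:ℂ)^3 - (L:ℂ)^3) / (3 * (L:ℂ)^2))‖
          = ‖y‖ * z / L := by
        rw [norm_mul, habs1 z, mul_one, norm_div, norm_mul]
        simp [Complex.norm_real, Real.norm_eq_abs, abs_of_nonneg hz.1, abs_of_pos hL]
      rw [h1]
      push_cast
      ring
    refine hprod.congr_deriv ?_
    rw [hnorm]
    field_simp
    ring
  · simp [hqdef]
  · rw [hqdef]
    simp only [sub_self, zero_div, mul_zero, zero_mul]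
    rw [Complex.exp_zero, mul_one]
    field_simp
  · rw [hndef]
    have habs : ∀ z : ℝ, ‖(y / (L:ℂ)) *
        Complex.exp (Complex.I * (γ:ℂ) * ((‖y‖:ℂ))^2 * ((z:ℂ)^3 - (L:ℂ)^3) / (3 * (L:ℂ)^2))‖^2
        = ‖y‖^2 / L^2 := by
      intro z
      rw [norm_mul, habs1 z, mul_one, norm_div, Complex.norm_real, Real.norm_eq_abs,
        abs_of_pos hL, div_pow]
    simp only [habs]
    rw [intervalIntegral.integral_const, sub_zero, smul_eq_mul]
    field_simp
end

section
/- The adversarial distance from the origin is d(x, 0) = |x|²/(4L) for every x ∈ ℂ. -/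
/-- Energy (effort) of a control on `[0, L]`. -/
noncomputable def energy (L : ℝ) (n : ℝ → ℂ) : ℝ := ∫ z in (0:ℝ)..L, ‖n z‖^2

/-- The noise ball `B_E(x)`: outputs reachable from input `x` with effort at most `E`. -/
def noiseBall (γ L : ℝ) (x : ℂ) (E : ℝ) : Set ℂ :=
  {y | ∃ n q : ℝ → ℂ, ContinuousOn n (Set.Icc 0 L) ∧ IsSol γ L n q ∧
    q 0 = x ∧ q L = y ∧ energy L n ≤ E}

/-- The adversarial distance between two input points. -/
noncomputable def adist (γ L : ℝ) (x₁ x₂ : ℂ) : ℝ :=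
  sInf {E | 0 ≤ E ∧ (noiseBall γ L x₁ E ∩ noiseBall γ L x₂ E).Nonempty}

open Complex Set

lemma constr_isSol (γ L : ℝ) (x : ℂ) (r φ r' : ℝ → ℝ)
    (hr : ∀ z, HasDerivAt r (r' z) z)
    (hφ : ∀ z, HasDerivAt φ (γ * ‖x‖^2 * (r z)^2) z)
    (hrpos : ∀ z ∈ Icc (0:ℝ) L, 0 ≤ r z) :
    IsSol γ L (fun z => x * (r' z : ℂ) * Complex.exp ((φ z : ℂ) * Complex.I))
      (fun z => x * (r z : ℂ) * Complex.exp ((φ z : ℂ) * Complex.I)) := by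
  intro z hz
  have h1 : HasDerivAt (fun z => x * ((r z : ℝ) : ℂ)) (x * (r' z : ℂ)) z :=
    ((hr z).ofReal_comp).const_mul x
  have h2 : HasDerivAt (fun z => Complex.exp ((φ z : ℂ) * Complex.I))
      (Complex.exp ((φ z : ℂ) * Complex.I) * (((γ * ‖x‖^2 * (r z)^2 : ℝ) : ℂ) * Complex.I)) z :=
    (((hφ z).ofReal_comp).mul_const Complex.I).cexp
  have h3 := h1.mul h2
  have hnorm : ‖x * ((r z : ℝ) : ℂ) * Complex.exp ((φ z : ℂ) * Complex.I)‖ = ‖x‖ * r z := by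
    rw [norm_mul, norm_mul, Complex.norm_exp_ofReal_mul_I, Complex.norm_real, Real.norm_eq_abs,
      _root_.abs_of_nonneg (hrpos z hz), mul_one]
  refine h3.congr_deriv ?_
  rw [hnorm]
  push_cast
  ring

lemma constr_energy (L : ℝ) (hL : 0 < L) (x : ℂ) (c : ℝ) (hc : |c| = 1/(2*L)) (φ : ℝ → ℝ) :
    energy L (fun z => x * (c : ℂ) * Complex.exp ((φ z : ℂ) * Complex.I)) = ‖x‖^2/(4*L) := by
  unfold energy
  have : ∀ z : ℝ, ‖x * (c : ℂ) * Complex.exp ((φ z : ℂ) * Complex.I)‖^2 = ‖x‖^2/(4*L^2) := by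
    intro z
    rw [norm_mul, norm_mul, Complex.norm_exp_ofReal_mul_I, Complex.norm_real, Real.norm_eq_abs,
      hc, mul_one]
    field_simp
    ring_nf
  simp only [this, intervalIntegral.integral_const, smul_eq_mul]
  field_simp
  ring

lemma mem_balls (γ L : ℝ) (hL : 0 < L) (x : ℂ) :
    ∃ y, y ∈ noiseBall γ L x (‖x‖^2/(4*L)) ∩ noiseBall γ L 0 (‖x‖^2/(4*L)) := by
  set a := γ * ‖x‖^2 with ha
  set r₁ : ℝ → ℝ := fun z => 1 - z/(2*L) with hr₁
  set φ₁ : ℝ → ℝ := fun z => a * (z - z^2/(2*L) + z^3/(12*L^2)) with hφ₁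
  set r₂ : ℝ → ℝ := fun z => z/(2*L) with hr₂
  set φ₂ : ℝ → ℝ := fun z => a * (z^3/(12*L^2) + L/2) with hφ₂
  have hLne : L ≠ 0 := hL.ne'
  have hdr₁ : ∀ z : ℝ, HasDerivAt r₁ (-(1/(2*L))) z := by
    intro z
    have := ((hasDerivAt_id z).div_const (2*L)).const_sub 1
    simpa using this
  have hdr₂ : ∀ z : ℝ, HasDerivAt r₂ (1/(2*L)) z := by
    intro z
    have := (hasDerivAt_id z).div_const (2*L)
    simpa [one_div] using this
  have hdφ₁ : ∀ z : ℝ, HasDerivAt φ₁ (a * (r₁ z)^2) z := by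
    intro z
    have h2 := hasDerivAt_pow 2 z
    have h3 := hasDerivAt_pow 3 z
    have h := (((hasDerivAt_id z).sub (h2.div_const (2*L))).add (h3.div_const (12*L^2))).const_mul a
    refine h.congr_deriv ?_
    simp only [hr₁, id_eq]
    field_simp
    ring_nf
  have hdφ₂ : ∀ z : ℝ, HasDerivAt φ₂ (a * (r₂ z)^2) z := by
    intro z
    have h3 := hasDerivAt_pow 3 z
    have h := ((h3.div_const (12*L^2)).add_const (L/2)).const_mul a
    refine h.congr_deriv ?_
    simp only [hr₂]
    field_simp
    ring_nf
  have hφ₁c : Continuous φ₁ := continuous_iff_continuousAt.mpr fun z => (hdφ₁ z).continuousAt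
  have hφ₂c : Continuous φ₂ := continuous_iff_continuousAt.mpr fun z => (hdφ₂ z).continuousAt
  have hpos₁ : ∀ z ∈ Icc (0:ℝ) L, 0 ≤ r₁ z := by
    intro z hz
    simp only [hr₁]
    rw [sub_nonneg, div_le_one (by positivity)]
    linarith [hz.2]
  have hpos₂ : ∀ z ∈ Icc (0:ℝ) L, 0 ≤ r₂ z := fun z hz => div_nonneg hz.1 (by positivity)
  have hcont : ∀ (c : ℝ) (φ : ℝ → ℝ), Continuous φ →
      ContinuousOn (fun z => x * ((c:ℝ):ℂ) * Complex.exp ((φ z : ℂ) * Complex.I)) (Icc (0:ℝ) L) := by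
    intro c φ hφ
    exact (continuous_const.mul (Complex.continuous_exp.comp
      ((Complex.continuous_ofReal.comp hφ).mul continuous_const))).continuousOn
  refine ⟨x * ((r₁ L : ℝ) : ℂ) * Complex.exp ((φ₁ L : ℂ) * Complex.I), ?_, ?_⟩
  · refine ⟨fun z => x * ((-(1/(2*L)) : ℝ) : ℂ) * Complex.exp ((φ₁ z : ℂ) * Complex.I),
      fun z => x * ((r₁ z : ℝ) : ℂ) * Complex.exp ((φ₁ z : ℂ) * Complex.I),
      hcont _ _ hφ₁c, constr_isSol γ L x r₁ φ₁ (fun _ => -(1/(2*L))) hdr₁ hdφ₁ hpos₁,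
      ?_, rfl, le_of_eq (constr_energy L hL x _ ?_ φ₁)⟩
    · simp [hr₁, hφ₁]
    · rw [abs_neg, abs_of_pos (by positivity)]
  · refine ⟨fun z => x * ((1/(2*L) : ℝ) : ℂ) * Complex.exp ((φ₂ z : ℂ) * Complex.I),
      fun z => x * ((r₂ z : ℝ) : ℂ) * Complex.exp ((φ₂ z : ℂ) * Complex.I),
      hcont _ _ hφ₂c, constr_isSol γ L x r₂ φ₂ (fun _ => 1/(2*L)) hdr₂ hdφ₂ hpos₂,
      ?_, ?_, le_of_eq (constr_energy L hL x _ (abs_of_pos (by positivity)) φ₂)⟩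
    · simp [hr₂]
    · have e1 : r₂ L = r₁ L := by
        simp only [hr₁, hr₂]
        field_simp
        ring
      have e2 : φ₂ L = φ₁ L := by
        simp only [hφ₁, hφ₂]
        field_simp
        ring
      show x * ((r₂ L : ℝ) : ℂ) * _ = _
      rw [e1, e2]

lemma radial_bound (γ L : ℝ) (hL : 0 < L) (n q : ℝ → ℂ)
    (hn : ContinuousOn n (Set.Icc 0 L)) (hq : IsSol γ L n q) :
    |‖q L‖ - ‖q 0‖| ≤ ∫ z in (0:ℝ)..L, ‖n z‖ := by
  have hqc : ContinuousOn q (Icc 0 L) := fun z hz => ((hq z hz).continuousAt).continuousWithinAt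
  have hns : ∀ w, Complex.normSq (q w) = ‖q w‖^2 := fun w => by
    rw [Complex.normSq_eq_norm_sq]
  refine le_of_forall_pos_le_add fun ε hε => ?_
  set F : ℝ → ℝ := fun w => Complex.normSq (q w) + ε^2 with hF
  have hFpos : ∀ w, 0 < F w := fun w =>
    add_pos_of_nonneg_of_pos (Complex.normSq_nonneg _) (pow_pos hε 2)
  set g : ℝ → ℝ := fun w => Real.sqrt (F w) with hg
  set G : ℝ → ℝ := fun w => ((starRingEnd ℂ) (q w) * n w).re / Real.sqrt (F w) with hG
  -- derivative of F
  have hdF : ∀ z ∈ Icc (0:ℝ) L, HasDerivAt F (2 * ((starRingEnd ℂ) (q z) * n z).re) z := by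
    intro z hz
    have hd := hq z hz
    set d := Complex.I * (γ:ℂ) * ((‖q z‖:ℂ))^2 * q z + n z with hdd
    have hre : HasDerivAt (fun w => (q w).re) ((d).re) z :=
      Complex.reCLM.hasFDerivAt.comp_hasDerivAt z hd
    have him : HasDerivAt (fun w => (q w).im) ((d).im) z :=
      Complex.imCLM.hasFDerivAt.comp_hasDerivAt z hd
    have h := ((hre.pow 2).add (him.pow 2)).add_const (ε^2)
    have hfun : F = fun w => ((q w).re ^2 + (q w).im ^2) + ε^2 := by
      funext w; simp [hF, Complex.normSq_apply, pow_two]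
    rw [hfun]
    refine h.congr_deriv ?_
    have hd2 : d = Complex.I * (γ:ℂ) * ((‖q z‖^2 : ℝ):ℂ) * q z + n z := by
      rw [hdd]; push_cast; ring
    rw [hd2]
    simp [Complex.add_re, Complex.add_im, Complex.mul_re, Complex.mul_im,
      Complex.I_re, Complex.I_im, Complex.ofReal_re, Complex.ofReal_im, Complex.conj_re,
      Complex.conj_im, ← Complex.ofReal_pow]
    ring
  -- derivative of g
  have hdg : ∀ z ∈ Icc (0:ℝ) L, HasDerivAt g (G z) z := by
    intro z hz
    have h := (Real.hasDerivAt_sqrt (hFpos z).ne').comp z (hdF z hz)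
    refine h.congr_deriv ?_
    have hs : 0 < Real.sqrt (F z) := Real.sqrt_pos.mpr (hFpos z)
    simp only [hG]
    field_simp
  -- continuity of G
  have hGc : ContinuousOn G (Icc (0:ℝ) L) := by
    apply ContinuousOn.div
    · exact Complex.continuous_re.comp_continuousOn
        (((Complex.continuous_conj.comp_continuousOn hqc)).mul hn)
    · exact Real.continuous_sqrt.comp_continuousOn
        ((Complex.continuous_normSq.comp_continuousOn hqc).add continuousOn_const)
    · exact fun z hz => (Real.sqrt_pos.mpr (hFpos z)).ne'
  have huIcc : Set.uIcc (0:ℝ) L = Icc 0 L := Set.uIcc_of_le hL.le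
  have hGi : IntervalIntegrable G MeasureTheory.volume 0 L := by
    apply ContinuousOn.intervalIntegrable; rwa [huIcc]
  have hni : IntervalIntegrable (fun z => ‖n z‖) MeasureTheory.volume 0 L := by
    apply ContinuousOn.intervalIntegrable; rw [huIcc]; exact hn.norm
  have hftc : ∫ z in (0:ℝ)..L, G z = g L - g 0 :=
    intervalIntegral.integral_eq_sub_of_hasDerivAt (fun z hz => hdg z (huIcc ▸ hz)) hGi
  -- pointwise bound ‖G z‖ ≤ ‖n z‖
  have hbound : ∀ z, ‖G z‖ ≤ ‖n z‖ := by
    intro z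
    have hs : 0 < Real.sqrt (F z) := Real.sqrt_pos.mpr (hFpos z)
    rw [Real.norm_eq_abs, hG]
    rw [abs_div, abs_of_pos hs, div_le_iff₀ hs]
    have h1 : |((starRingEnd ℂ) (q z) * n z).re| ≤ ‖q z‖ * ‖n z‖ := by
      calc |((starRingEnd ℂ) (q z) * n z).re| ≤ ‖(starRingEnd ℂ) (q z) * n z‖ :=
            Complex.abs_re_le_norm _
        _ = ‖q z‖ * ‖n z‖ := by rw [norm_mul, RingHomIsometric.norm_map]
    refine h1.trans ?_
    have h2 : ‖q z‖ ≤ Real.sqrt (F z) := by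
      rw [hF]
      have : ‖q z‖ = Real.sqrt (Complex.normSq (q z)) := by
        rw [hns]; rw [Real.sqrt_sq (norm_nonneg _)]
      rw [this]
      exact Real.sqrt_le_sqrt (le_add_of_nonneg_right (sq_nonneg ε))
    nlinarith [norm_nonneg (n z), norm_nonneg (q z)]
  have hmain : |g L - g 0| ≤ ∫ z in (0:ℝ)..L, ‖n z‖ := by
    rw [← hftc]
    have := intervalIntegral.norm_integral_le_abs_of_norm_le
      (μ := MeasureTheory.volume) (f := G) (g := fun z => ‖n z‖) (a := 0) (b := L)
      (MeasureTheory.ae_of_all _ fun t => hbound t) hni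
    rw [Real.norm_eq_abs] at this
    refine this.trans (le_of_eq (abs_of_nonneg ?_))
    exact intervalIntegral.integral_nonneg hL.le fun z _ => norm_nonneg _
  -- compare g with norms
  have hup : ∀ w, ‖q w‖ ≤ g w := by
    intro w
    have : ‖q w‖ = Real.sqrt (Complex.normSq (q w)) := by
      rw [hns]; rw [Real.sqrt_sq (norm_nonneg _)]
    rw [this, hg]
    exact Real.sqrt_le_sqrt (le_add_of_nonneg_right (sq_nonneg ε))
  have hdown : ∀ w, g w ≤ ‖q w‖ + ε := by
    intro w
    rw [hg]
    have h1 : F w ≤ (‖q w‖ + ε)^2 := by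
      show Complex.normSq (q w) + ε^2 ≤ _
      rw [hns]; nlinarith [norm_nonneg (q w), hε.le]
    calc Real.sqrt (F w) ≤ Real.sqrt ((‖q w‖ + ε)^2) := Real.sqrt_le_sqrt h1
      _ = ‖q w‖ + ε := Real.sqrt_sq (by positivity)
  have h1 := hup L; have h2 := hdown L; have h3 := hup 0; have h4 := hdown 0
  rw [abs_sub_le_iff]
  have habs1 : g L - g 0 ≤ |g L - g 0| := le_abs_self _
  have habs2 : -(g L - g 0) ≤ |g L - g 0| := neg_le_abs _
  exact ⟨by linarith, by linarith⟩

lemma integral_norm_le (L c : ℝ) (hL : 0 < L) (hc : 0 < c) (n : ℝ → ℂ)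
    (hn : ContinuousOn n (Set.Icc 0 L)) :
    (∫ z in (0:ℝ)..L, ‖n z‖) ≤ energy L n / (2*c) + c*L/2 := by
  have huIcc : Set.uIcc (0:ℝ) L = Icc 0 L := Set.uIcc_of_le hL.le
  have hni : IntervalIntegrable (fun z => ‖n z‖) MeasureTheory.volume 0 L := by
    apply ContinuousOn.intervalIntegrable; rw [huIcc]; exact hn.norm
  have hn2i : IntervalIntegrable (fun z => ‖n z‖^2) MeasureTheory.volume 0 L := by
    apply ContinuousOn.intervalIntegrable; rw [huIcc]; exact hn.norm.pow 2
  have hmix : IntervalIntegrable (fun z => ‖n z‖^2/(2*c) + c/2) MeasureTheory.volume 0 L :=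
    (hn2i.div_const (2*c)).add intervalIntegrable_const
  have hmono : (∫ z in (0:ℝ)..L, ‖n z‖) ≤ ∫ z in (0:ℝ)..L, (‖n z‖^2/(2*c) + c/2) := by
    apply intervalIntegral.integral_mono_on hL.le hni hmix
    intro z _
    rw [div_add_div _ _ (by positivity) (by positivity), le_div_iff₀ (by positivity)]
    nlinarith [sq_nonneg (‖n z‖ - c)]
  refine hmono.trans (le_of_eq ?_)
  rw [intervalIntegral.integral_add (hn2i.div_const (2*c)) intervalIntegrable_const,
    intervalIntegral.integral_div, intervalIntegral.integral_const]
  unfold energy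
  simp
  ring


/-- Distance from the origin: `d(x,0) = |x|²/(4L)`. -/
theorem adist_from_origin (γ L : ℝ) (hL : 0 < L) (x : ℂ) :
    adist γ L x 0 = ‖x‖^2 / (4 * L) := by
  have hub : ‖x‖^2/(4*L) ∈ {E | 0 ≤ E ∧ (noiseBall γ L x E ∩ noiseBall γ L 0 E).Nonempty} :=
    ⟨by positivity, mem_balls γ L hL x⟩
  have hlb : ∀ E ∈ {E | 0 ≤ E ∧ (noiseBall γ L x E ∩ noiseBall γ L 0 E).Nonempty},
      ‖x‖^2/(4*L) ≤ E := by
    rintro E ⟨hE0, y, ⟨n₁, q₁, hn₁, hs₁, h10, h1L, he₁⟩, ⟨n₂, q₂, hn₂, hs₂, h20, h2L, he₂⟩⟩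
    rw [div_le_iff₀ (by positivity)]
    rcases eq_or_lt_of_le (norm_nonneg x) with hx | hx
    · rw [← hx]
      simpa using mul_nonneg hE0 (by positivity : (0:ℝ) ≤ 4*L)
    set c := ‖x‖/(2*L) with hcdef
    have hc : 0 < c := by positivity
    have k1 := radial_bound γ L hL n₁ q₁ hn₁ hs₁
    have k2 := radial_bound γ L hL n₂ q₂ hn₂ hs₂
    rw [h10, h1L] at k1
    rw [h20, h2L, norm_zero, sub_zero, abs_norm] at k2
    have i1 := integral_norm_le L c hL hc n₁ hn₁
    have i2 := integral_norm_le L c hL hc n₂ hn₂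
    have a1 : ‖x‖ - ‖y‖ ≤ ∫ z in (0:ℝ)..L, ‖n₁ z‖ := (abs_sub_le_iff.mp k1).2
    have d1 : energy L n₁/(2*c) ≤ E/(2*c) := (div_le_div_iff_of_pos_right (by positivity)).mpr he₁
    have d2 : energy L n₂/(2*c) ≤ E/(2*c) := (div_le_div_iff_of_pos_right (by positivity)).mpr he₂
    have key : ‖x‖ ≤ E/c + c*L := by
      have : E/(2*c) + E/(2*c) = E/c := by ring
      linarith
    have h3 := mul_le_mul_of_nonneg_right key hc.le
    rw [add_mul, div_mul_cancel₀ _ hc.ne'] at h3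
    have hx2 : ‖x‖ = c*(2*L) := by rw [hcdef]; field_simp
    rw [hx2] at h3 ⊢
    nlinarith [h3, hL, hc]
  show sInf _ = _
  exact IsLeast.csInf_eq ⟨hub, hlb⟩
end

section
/- The radial distance satisfies d_R(x₁, x₂) = (|x₁| − |x₂|)² / (4L) for all x₁, x₂ ∈ ℂ. -/
/-- The radial distance: minimum adversarial distance between the circle of
radius `|x₁|` and the circle of radius `|x₂|`. -/
noncomputable def radialDist (γ L : ℝ) (x₁ x₂ : ℂ) : ℝ :=
  sInf {e | ∃ x y : ℂ, ‖x‖ = ‖x₁‖ ∧ ‖y‖ = ‖x₂‖ ∧ e = adist γ L x y}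

open Complex in
lemma core_sol (γ L : ℝ) (hL : 0 < L) (a b φ₀ : ℝ) :
    ∃ n q : ℝ → ℂ, ContinuousOn n (Set.Icc 0 L) ∧ IsSol γ L n q ∧
      q 0 = (a : ℂ) * Complex.exp ((φ₀ : ℂ) * Complex.I) ∧
      q L = (b : ℂ) * Complex.exp (((φ₀ + γ * L * (a * b + (b - a) ^ 2 / 3) : ℝ) : ℂ) * Complex.I) ∧
      energy L n = (b - a) ^ 2 / L := by
  set c : ℝ := (b - a) / L with hc
  have hcL : c * L = b - a := by rw [hc]; field_simp
  set θ : ℝ → ℝ := fun z => φ₀ + γ * (a ^ 2 * z + a * c * z ^ 2 + c ^ 2 * z ^ 3 / 3) with hθdef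
  have hθcont : Continuous θ := by fun_prop
  have hnorm : ∀ z : ℝ, ‖Complex.exp ((θ z : ℂ) * Complex.I)‖ = 1 := by
    intro z
    simp [Complex.norm_exp]
  refine ⟨fun z => (c : ℂ) * Complex.exp ((θ z : ℂ) * Complex.I),
    fun z => ((a + c * z : ℝ) : ℂ) * Complex.exp ((θ z : ℂ) * Complex.I), ?_, ?_, ?_, ?_, ?_⟩
  · exact Continuous.continuousOn (by fun_prop)
  · intro z _
    have hz1 : HasDerivAt (fun z : ℝ => z) 1 z := hasDerivAt_id z
    have h2 : HasDerivAt (fun z : ℝ => z ^ 2) (2 * z) z := by simpa using hasDerivAt_pow 2 z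
    have h3 : HasDerivAt (fun z : ℝ => z ^ 3) (3 * z ^ 2) z := by simpa using hasDerivAt_pow 3 z
    have hθ' : HasDerivAt θ (γ * (a + c * z) ^ 2) z := by
      have h4 := ((((hz1.const_mul (a ^ 2)).add (h2.const_mul (a * c))).add
        ((h3.const_mul (c ^ 2)).div_const 3)).const_mul γ).const_add φ₀
      refine h4.congr_deriv ?_
      ring
    have hE : HasDerivAt (fun z => Complex.exp ((θ z : ℂ) * Complex.I))
        (((γ * (a + c * z) ^ 2 : ℝ) : ℂ) * Complex.I * Complex.exp ((θ z : ℂ) * Complex.I)) z := by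
      have := (hθ'.ofReal_comp.mul_const Complex.I).cexp
      refine this.congr_deriv ?_
      ring
    have hρ : HasDerivAt (fun z : ℝ => ((a + c * z : ℝ) : ℂ)) ((c : ℝ) : ℂ) z := by
      have : HasDerivAt (fun z : ℝ => a + c * z) c z := by
        simpa using ((hasDerivAt_id z).const_mul c).const_add a
      exact this.ofReal_comp
    have hq := hρ.mul hE
    refine hq.congr_deriv ?_
    have h5 : ‖((a + c * z : ℝ) : ℂ) * Complex.exp ((θ z : ℂ) * Complex.I)‖ = |a + c * z| := by
      rw [norm_mul, hnorm, Complex.norm_real, Real.norm_eq_abs, mul_one]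
    rw [h5]
    have h6 : ((|a + c * z| : ℝ) : ℂ) ^ 2 = (((a + c * z) : ℝ) : ℂ) ^ 2 := by
      rw [← Complex.ofReal_pow, ← Complex.ofReal_pow, _root_.sq_abs]
    rw [h6]
    push_cast
    ring
  · have : θ 0 = φ₀ := by simp [hθdef]
    norm_num [this]
  · have h1 : (a : ℝ) + c * L = b := by linarith [hcL]
    have h2 : θ L = φ₀ + γ * L * (a * b + (b - a) ^ 2 / 3) := by
      simp only [hθdef]
      have hL' : L ≠ 0 := ne_of_gt hL
      field_simp [hc]
      linear_combination γ * L * (L * c + (b - a) + 3 * a) * hcL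
    show ((a + c * L : ℝ) : ℂ) * _ = _
    rw [h1, h2]
  · unfold energy
    have h7 : ∀ z : ℝ, ‖(c : ℂ) * Complex.exp ((θ z : ℂ) * Complex.I)‖ ^ 2 = c ^ 2 := by
      intro z
      rw [norm_mul, hnorm, Complex.norm_real, Real.norm_eq_abs, mul_one, _root_.sq_abs]
    simp only [h7]
    rw [intervalIntegral.integral_const, smul_eq_mul, sub_zero, hc]
    field_simp

lemma energy_nonneg (L : ℝ) (hL : 0 ≤ L) (n : ℝ → ℂ) : 0 ≤ energy L n :=
  intervalIntegral.integral_nonneg hL (fun _ _ => sq_nonneg _)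

lemma norm_bound (γ L : ℝ) (hL : 0 < L) (n q : ℝ → ℂ)
    (hn : ContinuousOn n (Set.Icc 0 L)) (hq : IsSol γ L n q) :
    |‖q L‖ - ‖q 0‖| ≤ Real.sqrt (L * energy L n) := by
  set B := Real.sqrt (L * energy L n) with hB
  set f : ℝ → ℝ := fun z => (q z).re ^ 2 + (q z).im ^ 2 with hf
  have hfq : ∀ z, ‖q z‖ = Real.sqrt (f z) := by
    intro z
    rw [Complex.norm_def, Complex.normSq_apply]
    congr 1
    ring
  have hf0 : ∀ z, 0 ≤ f z := fun z => add_nonneg (sq_nonneg _) (sq_nonneg _)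
  have hqc : ContinuousOn q (Set.Icc 0 L) := fun z hz =>
    (hq z hz).continuousAt.continuousWithinAt
  have hfc : ContinuousOn f (Set.Icc 0 L) :=
    ((Complex.continuous_re.comp_continuousOn hqc).pow 2).add
      ((Complex.continuous_im.comp_continuousOn hqc).pow 2)
  -- Cauchy–Schwarz part
  have hIntn : IntervalIntegrable (fun z => ‖n z‖) MeasureTheory.volume 0 L := by
    apply ContinuousOn.intervalIntegrable
    rw [Set.uIcc_of_le hL.le]; exact hn.norm
  have hIntn2 : IntervalIntegrable (fun z => ‖n z‖ ^ 2) MeasureTheory.volume 0 L := by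
    apply ContinuousOn.intervalIntegrable
    rw [Set.uIcc_of_le hL.le]; exact hn.norm.pow 2
  set I1 := ∫ z in (0:ℝ)..L, ‖n z‖ with hI1
  have hI1nn : 0 ≤ I1 := intervalIntegral.integral_nonneg hL.le fun _ _ => norm_nonneg _
  have hCS : I1 ≤ B := by
    have hexp : ∫ z in (0:ℝ)..L, (‖n z‖ - I1 / L) ^ 2
        = energy L n - 2 * (I1 / L) * I1 + (I1 / L) ^ 2 * L := by
      have hpt : ∀ z : ℝ, (‖n z‖ - I1 / L) ^ 2
          = (‖n z‖ ^ 2 - 2 * (I1 / L) * ‖n z‖) + (I1 / L) ^ 2 := by intro z; ring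
      simp_rw [hpt]
      rw [intervalIntegral.integral_add ((hIntn2.sub (hIntn.const_mul _)))
        intervalIntegrable_const,
        intervalIntegral.integral_sub hIntn2 (hIntn.const_mul _),
        intervalIntegral.integral_const_mul, intervalIntegral.integral_const]
      unfold energy
      rw [← hI1]
      simp [smul_eq_mul]
      ring
    have hpos : 0 ≤ ∫ z in (0:ℝ)..L, (‖n z‖ - I1 / L) ^ 2 :=
      intervalIntegral.integral_nonneg hL.le fun _ _ => sq_nonneg _
    rw [hexp] at hpos
    have hkey : I1 ^ 2 ≤ L * energy L n := by
      have hL0 : (L:ℝ) ≠ 0 := hL.ne'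
      have h9 : (2 * (I1 / L) * I1 : ℝ) = 2 * (I1 ^ 2 / L) := by field_simp
      have h10 : ((I1 / L) ^ 2 * L : ℝ) = I1 ^ 2 / L := by field_simp
      rw [h9, h10] at hpos
      have h11 : I1 ^ 2 / L ≤ energy L n := by linarith
      calc I1 ^ 2 = L * (I1 ^ 2 / L) := by field_simp
        _ ≤ L * energy L n := by
            exact mul_le_mul_of_nonneg_left h11 hL.le
    rw [hB, ← Real.sqrt_sq hI1nn]
    exact Real.sqrt_le_sqrt hkey
  -- ε-perturbed derivative bound
  have key : ∀ ε : ℝ, 0 < ε →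
      |Real.sqrt (f L + ε) - Real.sqrt (f 0 + ε)| ≤ B := by
    intro ε hε
    set G : ℝ → ℝ := fun z =>
      ((q z).re * (n z).re + (q z).im * (n z).im) / Real.sqrt (f z + ε) with hG
    have hA : ∀ z, 0 < Real.sqrt (f z + ε) := fun z =>
      Real.sqrt_pos.2 (by linarith [hf0 z])
    have hgd : ∀ z ∈ Set.Icc (0:ℝ) L,
        HasDerivAt (fun w => Real.sqrt (f w + ε)) (G z) z := by
      intro z hz
      have hD := hq z hz
      have hu : HasDerivAt (fun w => (q w).re)
          ((Complex.I * γ * (‖q z‖:ℂ) ^ 2 * q z + n z).re) z := by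
        exact Complex.reCLM.hasFDerivAt.comp_hasDerivAt z hD
      have hv : HasDerivAt (fun w => (q w).im)
          ((Complex.I * γ * (‖q z‖:ℂ) ^ 2 * q z + n z).im) z := by
        exact Complex.imCLM.hasFDerivAt.comp_hasDerivAt z hD
      have hre : (Complex.I * γ * (‖q z‖:ℂ) ^ 2 * q z + n z).re
          = -(γ * ‖q z‖ ^ 2 * (q z).im) + (n z).re := by
        simp [Complex.mul_re, Complex.mul_im, ← Complex.ofReal_pow]
      have him : (Complex.I * γ * (‖q z‖:ℂ) ^ 2 * q z + n z).im
          = γ * ‖q z‖ ^ 2 * (q z).re + (n z).im := by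
        simp [Complex.mul_re, Complex.mul_im, ← Complex.ofReal_pow]
      have hnq : ‖q z‖ ^ 2 = f z := by
        rw [hfq z, Real.sq_sqrt (hf0 z)]
      have hf' : HasDerivAt f
          (2 * ((q z).re * (n z).re + (q z).im * (n z).im)) z := by
        have h1 := (hu.pow 2).add (hv.pow 2)
        refine h1.congr_deriv ?_
        rw [hre, him, hnq]
        push_cast
        ring
      have h2 := (Real.hasDerivAt_sqrt
        (show (f z + ε) ≠ 0 by positivity)).comp z (hf'.add_const ε)
      refine h2.congr_deriv ?_
      rw [hG]
      field_simp
    have hGle : ∀ z ∈ Set.Icc (0:ℝ) L, |G z| ≤ ‖n z‖ := by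
      intro z hz
      have hA2 : Real.sqrt (f z + ε) ^ 2 = f z + ε :=
        Real.sq_sqrt (by linarith [hf0 z])
      have hn2 : ‖n z‖ ^ 2 = (n z).re ^ 2 + (n z).im ^ 2 := by
        rw [Complex.sq_norm, Complex.normSq_apply]
        ring
      have hXsq : ((q z).re * (n z).re + (q z).im * (n z).im) ^ 2
          ≤ (Real.sqrt (f z + ε) * ‖n z‖) ^ 2 := by
        have h1 := sq_nonneg ((q z).re * (n z).im - (q z).im * (n z).re)
        have h2 : 0 ≤ ε * ((n z).re ^ 2 + (n z).im ^ 2) := by positivity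
        have hfz : f z = (q z).re ^ 2 + (q z).im ^ 2 := rfl
        rw [mul_pow, hA2, hn2, hfz]
        nlinarith [h1, h2]
      have habs : |(q z).re * (n z).re + (q z).im * (n z).im|
          ≤ Real.sqrt (f z + ε) * ‖n z‖ := by
        rw [← Real.sqrt_sq_eq_abs]
        calc Real.sqrt (((q z).re * (n z).re + (q z).im * (n z).im) ^ 2)
            ≤ Real.sqrt ((Real.sqrt (f z + ε) * ‖n z‖) ^ 2) := Real.sqrt_le_sqrt hXsq
          _ = Real.sqrt (f z + ε) * ‖n z‖ := Real.sqrt_sq (by positivity)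
      rw [hG]
      rw [abs_div, abs_of_pos (hA z), div_le_iff₀ (hA z)]
      linarith [habs]
    have hGc : ContinuousOn G (Set.Icc 0 L) := by
      apply ContinuousOn.div
      · exact ((Complex.continuous_re.comp_continuousOn hqc).mul
          (Complex.continuous_re.comp_continuousOn hn)).add
          ((Complex.continuous_im.comp_continuousOn hqc).mul
          (Complex.continuous_im.comp_continuousOn hn))
      · exact Real.continuous_sqrt.comp_continuousOn (hfc.add continuousOn_const)
      · intro z _; exact (hA z).ne'
    have hIntG : IntervalIntegrable G MeasureTheory.volume 0 L := by
      apply ContinuousOn.intervalIntegrable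
      rwa [Set.uIcc_of_le hL.le]
    have hIntGa : IntervalIntegrable (fun z => |G z|) MeasureTheory.volume 0 L := by
      apply ContinuousOn.intervalIntegrable
      rw [Set.uIcc_of_le hL.le]
      exact hGc.abs
    have hFTC : Real.sqrt (f L + ε) - Real.sqrt (f 0 + ε) = ∫ z in (0:ℝ)..L, G z := by
      refine (intervalIntegral.integral_eq_sub_of_hasDerivAt
        (f := fun w => Real.sqrt (f w + ε)) (f' := G) ?_ hIntG).symm
      intro z hz
      exact hgd z (by rwa [Set.uIcc_of_le hL.le] at hz)
    rw [hFTC]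
    calc |∫ z in (0:ℝ)..L, G z| ≤ ∫ z in (0:ℝ)..L, |G z| :=
          intervalIntegral.abs_integral_le_integral_abs hL.le
      _ ≤ I1 := intervalIntegral.integral_mono_on hL.le hIntGa hIntn hGle
      _ ≤ B := hCS
  -- pass to the limit ε → 0
  have hBnn : 0 ≤ B := Real.sqrt_nonneg _
  have main : ∀ s t : ℝ, 0 ≤ s → 0 ≤ t →
      (∀ ε : ℝ, 0 < ε → Real.sqrt (s + ε) - Real.sqrt (t + ε) ≤ B) →
      Real.sqrt s - Real.sqrt t ≤ B := by
    intro s t hs ht h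
    have : Real.sqrt s ≤ Real.sqrt t + B := by
      apply le_of_forall_pos_le_add
      intro δ hδ
      have h1 := h (δ ^ 2) (by positivity)
      have h2 : Real.sqrt s ≤ Real.sqrt (s + δ ^ 2) :=
        Real.sqrt_le_sqrt (by linarith [sq_nonneg δ])
      have h3 : Real.sqrt (t + δ ^ 2) ≤ Real.sqrt t + δ := by
        have h4 : t + δ ^ 2 ≤ (Real.sqrt t + δ) ^ 2 := by
          nlinarith [Real.sq_sqrt ht, Real.sqrt_nonneg t]
        calc Real.sqrt (t + δ ^ 2) ≤ Real.sqrt ((Real.sqrt t + δ) ^ 2) :=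
              Real.sqrt_le_sqrt h4
          _ = Real.sqrt t + δ := Real.sqrt_sq (by positivity)
      linarith
    linarith
  rw [hfq L, hfq 0, abs_sub_le_iff]
  constructor
  · exact main (f L) (f 0) (hf0 L) (hf0 0) fun ε hε => (abs_le.1 (key ε hε)).2
  · exact main (f 0) (f L) (hf0 0) (hf0 L) fun ε hε => by linarith [(abs_le.1 (key ε hε)).1]

lemma reach_zero (γ L : ℝ) (hL : 0 < L) (x : ℂ) :
    (0 : ℂ) ∈ noiseBall γ L x (‖x‖ ^ 2 / L) := by
  obtain ⟨n, q, hc, hs, h0, hLq, he⟩ := core_sol γ L hL ‖x‖ 0 x.arg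
  refine ⟨n, q, hc, hs, ?_, ?_, ?_⟩
  · rw [h0]
    exact Complex.norm_mul_exp_arg_mul_I x
  · rw [hLq]; simp
  · rw [he]; norm_num

lemma reach_real (γ L : ℝ) (hL : 0 < L) (a b : ℝ) (ha : 0 ≤ a) :
    ∃ x' : ℂ, ‖x'‖ = a ∧ ((b : ℂ)) ∈ noiseBall γ L x' ((b - a) ^ 2 / L) := by
  obtain ⟨n, q, hc, hs, h0, hLq, he⟩ :=
    core_sol γ L hL a b (-(γ * L * (a * b + (b - a) ^ 2 / 3)))
  refine ⟨q 0, ?_, n, q, hc, hs, rfl, ?_, le_of_eq he⟩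
  · rw [h0, norm_mul, Complex.norm_real, Real.norm_eq_abs,
      Complex.norm_exp, Complex.mul_I_re, Complex.ofReal_im, abs_of_nonneg ha]
    simp
  · rw [hLq]
    norm_num

lemma lower_aux (γ L : ℝ) (hL : 0 < L) (x y : ℂ) (E : ℝ)
    (hE : 0 ≤ E) (hne : (noiseBall γ L x E ∩ noiseBall γ L y E).Nonempty) :
    (‖x‖ - ‖y‖) ^ 2 / (4 * L) ≤ E := by
  obtain ⟨w, ⟨n1, q1, hc1, hs1, h10, h1L, he1⟩, ⟨n2, q2, hc2, hs2, h20, h2L, he2⟩⟩ := hne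
  have hb1 : |‖w‖ - ‖x‖| ≤ Real.sqrt (L * E) := by
    have h := norm_bound γ L hL n1 q1 hc1 hs1
    rw [h10, h1L] at h
    exact h.trans (Real.sqrt_le_sqrt (mul_le_mul_of_nonneg_left he1 hL.le))
  have hb2 : |‖w‖ - ‖y‖| ≤ Real.sqrt (L * E) := by
    have h := norm_bound γ L hL n2 q2 hc2 hs2
    rw [h20, h2L] at h
    exact h.trans (Real.sqrt_le_sqrt (mul_le_mul_of_nonneg_left he2 hL.le))
  have htri : |‖x‖ - ‖y‖| ≤ 2 * Real.sqrt (L * E) := by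
    calc |‖x‖ - ‖y‖| ≤ |‖x‖ - ‖w‖| + |‖w‖ - ‖y‖| := abs_sub_le _ _ _
      _ ≤ 2 * Real.sqrt (L * E) := by
          rw [abs_sub_comm ‖x‖ ‖w‖]
          linarith [hb1, hb2]
  have hs : Real.sqrt (L * E) ^ 2 = L * E := Real.sq_sqrt (by positivity)
  rw [div_le_iff₀ (by positivity)]
  nlinarith [htri, sq_abs (‖x‖ - ‖y‖), abs_nonneg (‖x‖ - ‖y‖), Real.sqrt_nonneg (L * E)]

lemma adist_set_ne (γ L : ℝ) (hL : 0 < L) (x y : ℂ) :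
    {E | 0 ≤ E ∧ (noiseBall γ L x E ∩ noiseBall γ L y E).Nonempty}.Nonempty := by
  refine ⟨max (‖x‖ ^ 2 / L) (‖y‖ ^ 2 / L),
    le_max_of_le_left (by positivity), (0 : ℂ), ?_, ?_⟩
  · obtain ⟨n, q, hc, hs, h0, hLq, he⟩ := reach_zero γ L hL x
    exact ⟨n, q, hc, hs, h0, hLq, he.trans (le_max_left _ _)⟩
  · obtain ⟨n, q, hc, hs, h0, hLq, he⟩ := reach_zero γ L hL y
    exact ⟨n, q, hc, hs, h0, hLq, he.trans (le_max_right _ _)⟩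

private theorem radialDist_eq_aux (γ L : ℝ) (hL : 0 < L) (x₁ x₂ : ℂ) :
    radialDist γ L x₁ x₂ = (‖x₁‖ - ‖x₂‖)^2 / (4 * L) := by
  have hS_lb : ∀ x y : ℂ, ‖x‖ = ‖x₁‖ → ‖y‖ = ‖x₂‖ →
      (‖x₁‖ - ‖x₂‖) ^ 2 / (4 * L) ≤ adist γ L x y := by
    intro x y hx hy
    refine le_csInf (adist_set_ne γ L hL x y) ?_
    intro E hE
    have h := lower_aux γ L hL x y E hE.1 hE.2
    rwa [hx, hy] at h
  have hexists : ∃ x y : ℂ, ‖x‖ = ‖x₁‖ ∧ ‖y‖ = ‖x₂‖ ∧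
      adist γ L x y = (‖x₁‖ - ‖x₂‖) ^ 2 / (4 * L) := by
    obtain ⟨x, hx, hxball⟩ :=
      reach_real γ L hL ‖x₁‖ ((‖x₁‖ + ‖x₂‖) / 2) (norm_nonneg _)
    obtain ⟨y, hy, hyball⟩ :=
      reach_real γ L hL ‖x₂‖ ((‖x₁‖ + ‖x₂‖) / 2) (norm_nonneg _)
    have hc1 : ((‖x₁‖ + ‖x₂‖) / 2 - ‖x₁‖) ^ 2 / L = (‖x₁‖ - ‖x₂‖) ^ 2 / (4 * L) := by
      field_simp
      ring
    have hc2 : ((‖x₁‖ + ‖x₂‖) / 2 - ‖x₂‖) ^ 2 / L = (‖x₁‖ - ‖x₂‖) ^ 2 / (4 * L) := by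
      field_simp
      ring
    refine ⟨x, y, hx, hy, le_antisymm ?_ (hS_lb x y hx hy)⟩
    apply csInf_le ⟨0, fun E hE => hE.1⟩
    refine ⟨by positivity, ((((‖x₁‖ + ‖x₂‖) / 2 : ℝ)) : ℂ), ?_, ?_⟩
    · rwa [hc1] at hxball
    · rwa [hc2] at hyball
  obtain ⟨x, y, hx, hy, hval⟩ := hexists
  unfold radialDist
  apply le_antisymm
  · refine csInf_le ⟨(‖x₁‖ - ‖x₂‖) ^ 2 / (4 * L), ?_⟩ ⟨x, y, hx, hy, hval.symm⟩
    rintro e ⟨x', y', hx', hy', he⟩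
    rw [he]
    exact hS_lb x' y' hx' hy'
  · refine le_csInf ⟨_, x, y, hx, hy, hval.symm⟩ ?_
    rintro e ⟨x', y', hx', hy', he⟩
    rw [he]
    exact hS_lb x' y' hx' hy'

/-- The radial distance equals `(|x₁| − |x₂|)² / (4L)`. -/
theorem radialDist_eq (γ L : ℝ) (hL : 0 < L) (x₁ x₂ : ℂ) :
    radialDist γ L x₁ x₂ = (‖x₁‖ - ‖x₂‖)^2 / (4 * L) := by
  exact radialDist_eq_aux γ L hL x₁ x₂
end

section
/- For any two points x₁, x₂ ∈ ℂ \ {0} and any y ∈ ℂ \ {0} with |y| ∉ {|x₁|, |x₂|}, the adversarial distance satisfies d(x₁, x₂) ≤ max_{k∈{1,2}} ((|y| − |x_k|)²/L) · [1 + (Δ(x_k, y)/ln(|y|/|x_k|))²], where Δ(x,y) = ( arg(y/x) − (γL/3)(|y|³−|x|³)/(|y|−|x|) ) mod 2π taken in [−π, π). -/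
/-- `Δ(x,y)`: phase mismatch, reduced mod `2π` into `[-π, π)`. -/
noncomputable def Delta (γ L : ℝ) (x y : ℂ) : ℝ :=
  toIcoMod Real.two_pi_pos (-Real.pi)
    (Complex.arg (y / x) - (γ * L / 3) * (‖y‖^3 - ‖x‖^3) / (‖y‖ - ‖x‖))

open Complex Real in
lemma mem_noiseBall_construct (γ L : ℝ) (hL : 0 < L) (x y : ℂ) (hx : x ≠ 0) (hy : y ≠ 0)
    (h : ‖y‖ ≠ ‖x‖) :
    y ∈ noiseBall γ L x
      ((‖y‖ - ‖x‖)^2 / L * (1 + (Delta γ L x y / Real.log (‖y‖ / ‖x‖))^2)) := by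
  set r₀ : ℝ := ‖x‖ with hr₀def
  set r₁ : ℝ := ‖y‖ with hr₁def
  have hr₀ : 0 < r₀ := norm_pos_iff.mpr hx
  have hr₁ : 0 < r₁ := norm_pos_iff.mpr hy
  have hrne : r₁ ≠ r₀ := h
  have hrsub : r₁ - r₀ ≠ 0 := sub_ne_zero.mpr hrne
  set a : ℝ := (r₁ - r₀) / L with hadef
  set b : ℝ := Delta γ L x y / Real.log (r₁ / r₀) with hbdef
  set D : ℝ := Delta γ L x y with hDdef
  set φ : ℝ → ℝ := fun z => Complex.arg x +
    (γ * (r₀^2*z + r₀*a*z^2 + a^2*z^3/3) + b*(Real.log (r₀ + a*z) - Real.log r₀)) with hφdef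
  set q : ℝ → ℂ := fun z => ((r₀ + a*z : ℝ) : ℂ) * Complex.exp ((φ z : ℂ) * Complex.I)
    with hqdef
  set n : ℝ → ℂ := fun z => ((a : ℂ) * (1 + Complex.I * b)) * Complex.exp ((φ z : ℂ) * Complex.I)
    with hndef
  have haL : r₀ + a * L = r₁ := by rw [hadef]; field_simp; ring
  clear_value a b D
  -- positivity of the radial profile
  have hρpos : ∀ z ∈ Set.Icc (0:ℝ) L, 0 < r₀ + a * z := by
    intro z hz
    rcases le_or_gt r₀ r₁ with hle | hlt
    · have ha : 0 ≤ a := by rw [hadef]; exact div_nonneg (by linarith) hL.le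
      nlinarith [hz.1]
    · have ha : a < 0 := by rw [hadef]; exact div_neg_of_neg_of_pos (by linarith) hL
      have h2 : a * z ≥ a * L := by nlinarith [hz.2]
      nlinarith [hz.2]
  have hlog1 : Real.log (r₁ / r₀) ≠ 0 := by
    intro h0
    rcases Real.log_eq_zero.mp h0 with h' | h' | h'
    · exact absurd h' (div_ne_zero hr₁.ne' hr₀.ne')
    · exact hrne ((div_eq_one_iff_eq hr₀.ne').mp h')
    · nlinarith [div_pos hr₁ hr₀]
  refine ⟨n, q, ?_, ?_, ?_, ?_, ?_⟩
  · -- continuity of n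
    apply ContinuousOn.mul continuousOn_const
    apply Continuous.comp_continuousOn Complex.continuous_exp
    apply ContinuousOn.mul _ continuousOn_const
    apply Continuous.comp_continuousOn Complex.continuous_ofReal
    apply ContinuousOn.add continuousOn_const
    apply ContinuousOn.add (by fun_prop)
    apply ContinuousOn.mul continuousOn_const
    apply ContinuousOn.sub _ continuousOn_const
    exact ContinuousOn.log (by fun_prop) (fun z hz => (hρpos z hz).ne')
  · -- the ODE
    intro z hz
    have hzpos : 0 < r₀ + a * z := hρpos z hz
    have hρ : HasDerivAt (fun z : ℝ => r₀ + a*z) a z := by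
      simpa using ((hasDerivAt_id z).const_mul a).const_add r₀
    have hlog : HasDerivAt (fun z : ℝ => Real.log (r₀ + a*z)) (a/(r₀+a*z)) z :=
      hρ.log hzpos.ne'
    have hP : HasDerivAt (fun z : ℝ => r₀^2*z + r₀*a*z^2 + a^2*z^3/3)
        ((r₀ + a*z)^2) z := by
      have h1 : HasDerivAt (fun z : ℝ => r₀^2*z) (r₀^2) z := by
        simpa using (hasDerivAt_id z).const_mul (r₀^2)
      have h2 : HasDerivAt (fun z : ℝ => r₀*a*z^2) (r₀*a*(2*z)) z := by
        simpa using (hasDerivAt_pow 2 z).const_mul (r₀*a)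
      have h3 : HasDerivAt (fun z : ℝ => a^2*z^3/3) (a^2*(3*z^2)/3) z := by
        simpa using ((hasDerivAt_pow 3 z).const_mul (a^2)).div_const 3
      have := (h1.add h2).add h3
      refine this.congr_deriv ?_
      ring
    have hφ' : HasDerivAt φ (γ*(r₀+a*z)^2 + b*(a/(r₀+a*z))) z :=
      ((hP.const_mul γ).add ((hlog.sub_const (Real.log r₀)).const_mul b)).const_add
        (Complex.arg x)
    have hexp : HasDerivAt (fun z : ℝ => Complex.exp ((φ z : ℂ) * Complex.I))
        (Complex.exp ((φ z : ℂ) * Complex.I) *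
          (((γ*(r₀+a*z)^2 + b*(a/(r₀+a*z)) : ℝ) : ℂ) * Complex.I)) z :=
      (hφ'.ofReal_comp.mul_const Complex.I).cexp
    have hρC : HasDerivAt (fun z : ℝ => ((r₀ + a*z : ℝ) : ℂ)) ((a : ℝ) : ℂ) z :=
      hρ.ofReal_comp
    have hq' := hρC.mul hexp
    have hnorm : ‖q z‖ = r₀ + a * z := by
      rw [hqdef]
      rw [norm_mul, Complex.norm_real,
        Complex.norm_exp_ofReal_mul_I, mul_one, Real.norm_eq_abs, abs_of_pos hzpos]
    rw [hnorm]
    refine hq'.congr_deriv ?_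
    symm
    rw [hndef, hqdef]
    have hzne : ((r₀ + a*z : ℝ) : ℂ) ≠ 0 := Complex.ofReal_ne_zero.mpr hzpos.ne'
    set E := Complex.exp ((φ z : ℂ) * Complex.I) with hEdef
    have hcast : ((γ*(r₀+a*z)^2 + b*(a/(r₀+a*z)) : ℝ) : ℂ)
        = (γ:ℂ)*((r₀+a*z:ℝ):ℂ)^2 + (b:ℂ)*((a:ℂ)/((r₀+a*z:ℝ):ℂ)) := by push_cast; ring
    rw [hcast, div_eq_mul_inv]
    have hinv : ((r₀ + a*z : ℝ) : ℂ) * ((r₀ + a*z : ℝ) : ℂ)⁻¹ = 1 := mul_inv_cancel₀ hzne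
    linear_combination (-(Complex.I * (a:ℂ) * (b:ℂ) * E)) * hinv
  · -- q 0 = x
    have hφ0 : φ 0 = Complex.arg x := by rw [hφdef]; simp
    rw [hqdef]
    simp only [mul_zero, add_zero, hφ0]
    rw [hr₀def]
    exact Complex.norm_mul_exp_arg_mul_I x
  · -- q L = y
    have hγterm : γ * (r₀^2*L + r₀*a*L^2 + a^2*L^3/3)
        = (γ * L / 3) * (r₁^3 - r₀^3) / (r₁ - r₀) := by
      rw [hadef]; field_simp; ring
    have hb : b * (Real.log r₁ - Real.log r₀) = D := by
      rw [hbdef, ← Real.log_div hr₁.ne' hr₀.ne']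
      exact div_mul_cancel₀ _ hlog1
    set c : ℝ := Complex.arg (y / x) - (γ * L / 3) * (‖y‖^3 - ‖x‖^3) / (‖y‖ - ‖x‖) with hcdef
    obtain ⟨k, hk⟩ : ∃ k : ℤ, D = c - k * (2*π) := by
      refine ⟨toIcoDiv Real.two_pi_pos (-π) c, ?_⟩
      have : Delta γ L x y = c - toIcoDiv Real.two_pi_pos (-π) c • (2*π) := rfl
      rw [hDdef, this, zsmul_eq_mul]
    obtain ⟨m, hm⟩ : ∃ m : ℤ, Complex.arg (y/x) - (Complex.arg y - Complex.arg x) = 2*π*m := by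
      have h' := Complex.arg_div_coe_angle hy hx
      rw [← Real.Angle.coe_sub] at h'
      exact Real.Angle.angle_eq_iff_two_pi_dvd_sub.mp h'
    have hcr : c = Complex.arg (y/x) - (γ * L / 3) * (r₁^3 - r₀^3) / (r₁ - r₀) := by
      rw [hcdef, hr₀def, hr₁def]
    have hφLval : φ L = Complex.arg y + 2*π*((m:ℝ) - (k:ℝ)) := by
      have : φ L = Complex.arg x +
          (γ * (r₀^2*L + r₀*a*L^2 + a^2*L^3/3) + b*(Real.log (r₀ + a*L) - Real.log r₀)) := rfl
      rw [this, haL, hγterm, hb, hk, hcr]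
      linarith [hm]
    have hexpL : Complex.exp ((↑(φ L) : ℂ) * Complex.I)
        = Complex.exp ((Complex.arg y : ℂ) * Complex.I) := by
      rw [hφLval]
      rw [show ((Complex.arg y + 2*π*((m:ℝ) - (k:ℝ)) : ℝ) : ℂ) * Complex.I
          = (Complex.arg y : ℂ) * Complex.I + ((m - k : ℤ) : ℂ) * (2*(π:ℂ)*Complex.I) by
        push_cast; ring]
      rw [Complex.exp_add, Complex.exp_int_mul_two_pi_mul_I, mul_one]
    show ((r₀ + a*L : ℝ) : ℂ) * Complex.exp ((↑(φ L) : ℂ) * Complex.I) = y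
    rw [hexpL, haL, hr₁def]
    exact Complex.norm_mul_exp_arg_mul_I y
  · -- energy bound
    have hnn : ∀ w : ℝ, ‖n w‖^2 = a^2*(1+b^2) := by
      intro w
      rw [hndef]
      simp only
      rw [norm_mul, Complex.norm_exp_ofReal_mul_I, mul_one,
        norm_mul, Complex.norm_real, Real.norm_eq_abs, mul_pow, _root_.sq_abs]
      congr 1
      rw [Complex.sq_norm, Complex.normSq_apply]
      simp
      ring
    have hE : energy L n = L * (a^2*(1+b^2)) := by
      rw [energy]
      simp only [hnn]
      rw [intervalIntegral.integral_const, smul_eq_mul, sub_zero]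
    rw [hE]
    have : L * (a^2*(1+b^2)) = (r₁ - r₀)^2 / L * (1+b^2) := by
      rw [hadef]; field_simp
    linarith

/-- Upper bound on the adversarial distance obtained from constant-magnitude
controls driving both `x₁` and `x₂` to a common point `y`. -/
theorem adist_upper_bound (γ L : ℝ) (hL : 0 < L)
    (x₁ x₂ y : ℂ) (hx₁ : x₁ ≠ 0) (hx₂ : x₂ ≠ 0) (hy : y ≠ 0)
    (h₁ : ‖y‖ ≠ ‖x₁‖) (h₂ : ‖y‖ ≠ ‖x₂‖) :
    adist γ L x₁ x₂ ≤
      max ((‖y‖ - ‖x₁‖)^2 / L * (1 + (Delta γ L x₁ y / Real.log (‖y‖ / ‖x₁‖))^2))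
        ((‖y‖ - ‖x₂‖)^2 / L * (1 + (Delta γ L x₂ y / Real.log (‖y‖ / ‖x₂‖))^2)) := by

  set E₁ := (‖y‖ - ‖x₁‖)^2 / L * (1 + (Delta γ L x₁ y / Real.log (‖y‖ / ‖x₁‖))^2) with hE₁
  set E₂ := (‖y‖ - ‖x₂‖)^2 / L * (1 + (Delta γ L x₂ y / Real.log (‖y‖ / ‖x₂‖))^2) with hE₂
  have h0 : (0:ℝ) ≤ E₁ := by rw [hE₁]; positivity
  have hy1 : y ∈ noiseBall γ L x₁ (max E₁ E₂) := by
    obtain ⟨n, q, hc, hs, hq0, hqL, hEn⟩ := mem_noiseBall_construct γ L hL x₁ y hx₁ hy h₁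
    exact ⟨n, q, hc, hs, hq0, hqL, hEn.trans (le_max_left _ _)⟩
  have hy2 : y ∈ noiseBall γ L x₂ (max E₁ E₂) := by
    obtain ⟨n, q, hc, hs, hq0, hqL, hEn⟩ := mem_noiseBall_construct γ L hL x₂ y hx₂ hy h₂
    exact ⟨n, q, hc, hs, hq0, hqL, hEn.trans (le_max_right _ _)⟩
  rw [adist]
  apply csInf_le
  · exact ⟨0, fun E hE => hE.1⟩
  · exact ⟨h0.trans (le_max_left _ _), ⟨y, hy1, hy2⟩⟩
end

section
/- For every fixed angle φ ∈ [−π, π), the adversarial distance between antipodal-phase high-power points vanishes: lim_{|x|→∞} d(x, xe^{iφ}) = 0. Equivalently, for every ε > 0 there exists ρ such that d(x, xe^{iφ}) < ε whenever |x| > ρ. -/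
set_option maxHeartbeats 1000000


lemma norm_exp_I_mul_real (t : ℝ) : ‖Complex.exp (Complex.I * (t:ℂ))‖ = 1 := by
  rw [mul_comm]
  simpa using Complex.abs_exp_ofReal_mul_I t

/-- Main construction: amplitude-bump trajectory reaching a phase-shifted output. -/
lemma reach (γ L : ℝ) (hL : 0 < L) (x : ℂ) (hx : x ≠ 0) (δ : ℝ)
    (hδ : |δ| * L^2 < ‖x‖^2) :
    x * Complex.exp (Complex.I * ((γ * (‖x‖^2 * L) + γ * δ * L^3 / 6 : ℝ) : ℂ)) ∈
      noiseBall γ L x (δ^2 * L^3 / (2 * ‖x‖^2)) := by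
  set a : ℝ := ‖x‖ with ha
  have ha0 : 0 < a := norm_pos_iff.mpr hx
  set P : ℝ → ℝ := fun z => a^2 + δ * (z * (L - z)) with hPdef
  set r : ℝ → ℝ := fun z => Real.sqrt (P z) with hrdef
  set θ : ℝ → ℝ := fun z => γ * (a^2 * z + δ * (L * z^2 / 2 - z^3 / 3)) with hθdef
  set c : ℂ := x / (a : ℂ) with hcdef
  set rd : ℝ → ℝ := fun z => δ * (L - 2*z) / (2 * r z) with hrddef
  set q : ℝ → ℂ := fun z => c * (r z : ℂ) * Complex.exp (Complex.I * (θ z : ℂ)) with hqdef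
  set n : ℝ → ℂ := fun z => c * (rd z : ℂ) * Complex.exp (Complex.I * (θ z : ℂ)) with hndef
  have hane : (a : ℂ) ≠ 0 := by exact_mod_cast ha0.ne'
  have hcnorm : ‖c‖ = 1 := by
    rw [hcdef, norm_div, Complex.norm_real, Real.norm_eq_abs, abs_of_pos ha0, ← ha, div_self ha0.ne']
  -- positivity of P on Icc
  have hPpos : ∀ z ∈ Set.Icc (0:ℝ) L, a^2/2 ≤ P z := by
    intro z hz
    obtain ⟨hz0, hzL⟩ := hz
    have h1 : z * (L - z) ≤ L^2/4 := by nlinarith [sq_nonneg (L - 2*z)]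
    have h2 : (0:ℝ) ≤ z * (L - z) := mul_nonneg hz0 (by linarith)
    have h3 : |δ * (z * (L - z))| ≤ |δ| * (L^2/4) := by
      rw [abs_mul, abs_of_nonneg h2]
      exact mul_le_mul_of_nonneg_left (by linarith) (abs_nonneg δ)
    have := abs_le.mp h3
    nlinarith [abs_nonneg δ]
  have hP0 : ∀ z ∈ Set.Icc (0:ℝ) L, 0 < P z := by
    intro z hz
    have h1 := hPpos z hz
    have h2 : 0 < a^2 := pow_pos ha0 2
    clear_value P a
    linarith
  -- derivative of P
  have hPder : ∀ z : ℝ, HasDerivAt P (δ * (L - 2*z)) z := by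
    intro z
    have h1 : HasDerivAt (fun z : ℝ => z * (L - z)) (1 * (L - z) + z * (0 - 1)) z :=
      (hasDerivAt_id z).mul ((hasDerivAt_const z L).sub (hasDerivAt_id z))
    have h2 := (h1.const_mul δ).const_add (a^2)
    refine h2.congr_deriv ?_
    ring
  -- derivative of r on Icc
  have hrder : ∀ z ∈ Set.Icc (0:ℝ) L, HasDerivAt r (rd z) z := by
    intro z hz
    have hne : P z ≠ 0 := (hP0 z hz).ne'
    have h := (Real.hasDerivAt_sqrt hne).comp z (hPder z)
    refine h.congr_deriv ?_
    rw [hrddef]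
    ring
  -- derivative of θ
  have hθder : ∀ z : ℝ, HasDerivAt θ (γ * P z) z := by
    intro z
    have h2 : HasDerivAt (fun z : ℝ => z^2) ((2:ℕ) * z^1) z := hasDerivAt_pow 2 z
    have h3 : HasDerivAt (fun z : ℝ => z^3) ((3:ℕ) * z^2) z := hasDerivAt_pow 3 z
    have hmain : HasDerivAt (fun z : ℝ => a^2 * z + δ * (L * z^2 / 2 - z^3 / 3))
        (a^2 * 1 + δ * (L * ((2:ℕ) * z^1) / 2 - ((3:ℕ) * z^2) / 3)) z :=
      ((hasDerivAt_id z).const_mul (a^2)).add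
        ((((h2.const_mul L).div_const 2).sub (h3.div_const 3)).const_mul δ)
    have := hmain.const_mul γ
    refine this.congr_deriv ?_
    push_cast
    rw [hPdef]
    ring
  -- norm of q
  have hr_nonneg : ∀ z, 0 ≤ r z := fun z => Real.sqrt_nonneg _
  have hqnorm : ∀ z, ‖q z‖ = r z := by
    intro z
    rw [hqdef]
    simp only [norm_mul, hcnorm, Complex.norm_real, Real.norm_eq_abs,
      abs_of_nonneg (hr_nonneg z), norm_exp_I_mul_real]
    ring
  have hrsq : ∀ z ∈ Set.Icc (0:ℝ) L, (r z)^2 = P z := by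
    intro z hz
    exact Real.sq_sqrt (hP0 z hz).le
  -- q is a solution
  have hsol : IsSol γ L n q := by
    intro z hz
    have hq1 : HasDerivAt (fun w => c * (r w : ℂ)) ((c : ℂ) * (rd z : ℂ)) z :=
      ((hrder z hz).ofReal_comp).const_mul c
    have hq2 : HasDerivAt (fun w => Complex.exp (Complex.I * (θ w : ℂ)))
        (Complex.exp (Complex.I * (θ z : ℂ)) * (Complex.I * ((γ * P z : ℝ) : ℂ))) z :=
      (((hθder z).ofReal_comp).const_mul Complex.I).cexp
    have h := hq1.mul hq2
    have hqd : HasDerivAt q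
        (c * (rd z : ℂ) * Complex.exp (Complex.I * (θ z : ℂ)) +
          c * (r z : ℂ) * (Complex.exp (Complex.I * (θ z : ℂ)) * (Complex.I * ((γ * P z : ℝ) : ℂ)))) z := h
    convert hqd using 1
    rw [hqnorm z, hndef, hqdef]
    have : ((r z : ℂ))^2 = ((P z : ℝ) : ℂ) := by
      rw [← hrsq z hz]; push_cast; ring
    rw [this]
    push_cast
    ring
  -- continuity of n
  have hPcont : Continuous P := by
    rw [hPdef]; exact continuous_const.add (continuous_const.mul (continuous_id.mul (continuous_const.sub continuous_id)))
  have hrcont : Continuous r := Real.continuous_sqrt.comp hPcont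
  have hθcont : Continuous θ := by
    rw [hθdef]
    exact continuous_const.mul (((continuous_const.mul continuous_id).add
      (continuous_const.mul (((continuous_const.mul ((continuous_pow 2))).div_const 2).sub
        ((continuous_pow 3).div_const 3)))))
  have hexpcont : Continuous (fun z : ℝ => Complex.exp (Complex.I * (θ z : ℂ))) :=
    Complex.continuous_exp.comp (continuous_const.mul (Complex.continuous_ofReal.comp hθcont))
  have hrne : ∀ z ∈ Set.Icc (0:ℝ) L, 2 * r z ≠ 0 := by
    intro z hz
    have : 0 < r z := Real.sqrt_pos.mpr (hP0 z hz)
    positivity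
  have hrdcont : ContinuousOn rd (Set.Icc 0 L) := by
    rw [hrddef]
    exact ContinuousOn.div
      (Continuous.continuousOn (continuous_const.mul (continuous_const.sub (continuous_const.mul continuous_id))))
      (Continuous.continuousOn (continuous_const.mul hrcont)) hrne
  have hncont : ContinuousOn n (Set.Icc 0 L) := by
    rw [hndef]
    exact (continuousOn_const.mul (Complex.continuous_ofReal.comp_continuousOn hrdcont)).mul
      hexpcont.continuousOn
  -- endpoints
  have hq0 : q 0 = x := by
    rw [hqdef]
    simp only [hrdef, hPdef, hθdef, hcdef]
    norm_num
    rw [Real.sqrt_sq ha0.le]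
    field_simp
  have hqL : q L = x * Complex.exp (Complex.I * ((γ * (a^2 * L) + γ * δ * L^3 / 6 : ℝ) : ℂ)) := by
    rw [hqdef]
    have hPL : P L = a^2 := by rw [hPdef]; ring
    have hθL : θ L = γ * (a^2 * L) + γ * δ * L^3 / 6 := by rw [hθdef]; ring
    rw [hrdef]
    simp only [hPL, hθL, Real.sqrt_sq ha0.le, hcdef]
    rw [div_mul_cancel₀ _ hane]
  -- energy bound
  have hrdsq : ∀ z ∈ Set.Icc (0:ℝ) L, rd z ^ 2 ≤ δ^2 * L^2 / (2 * a^2) := by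
    intro z hz
    have hPz := hPpos z hz
    have hPz0 := hP0 z hz
    have hrz : (r z)^2 = P z := hrsq z hz
    have hrpos : 0 < r z := Real.sqrt_pos.mpr hPz0
    rw [hrddef]
    rw [div_pow]
    have hden : (2 * r z)^2 = 4 * P z := by rw [mul_pow]; rw [hrz]; ring
    rw [hden]
    have hnum : (δ * (L - 2*z))^2 ≤ δ^2 * L^2 := by
      obtain ⟨hz0, hzL⟩ := hz
      have key : 0 ≤ δ^2 * (z * (L - z)) :=
        mul_nonneg (sq_nonneg δ) (mul_nonneg hz0 (by linarith))
      nlinarith [key]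
    have h2a : 2 * a^2 ≤ 4 * P z := by clear_value P a; linarith
    apply div_le_div₀ (by positivity) hnum (by positivity) h2a
  have henergy : energy L n ≤ δ^2 * L^3 / (2 * a^2) := by
    have hnnorm : ∀ z, ‖n z‖^2 = rd z ^ 2 := by
      intro z
      rw [hndef]
      simp only [norm_mul, hcnorm, Complex.norm_real, Real.norm_eq_abs, norm_exp_I_mul_real]
      rw [← sq_abs (rd z)]
      ring
    rw [energy]
    simp only [hnnorm]
    have hint : IntervalIntegrable (fun z => rd z ^ 2) MeasureTheory.volume 0 L := by
      apply ContinuousOn.intervalIntegrable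
      rw [Set.uIcc_of_le hL.le]
      exact hrdcont.pow 2
    calc ∫ z in (0:ℝ)..L, rd z ^ 2
        ≤ ∫ _ in (0:ℝ)..L, δ^2 * L^2 / (2 * a^2) := by
          apply intervalIntegral.integral_mono_on hL.le hint intervalIntegrable_const
          exact hrdsq
      _ = δ^2 * L^3 / (2 * a^2) := by
          rw [intervalIntegral.integral_const, smul_eq_mul]
          ring
  exact ⟨n, q, hncont, hsol, hq0, hqL, henergy⟩

lemma noiseBall_mono (γ L : ℝ) (x : ℂ) {E E' : ℝ} (h : E ≤ E') :
    noiseBall γ L x E ⊆ noiseBall γ L x E' := by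
  rintro y ⟨n, q, h1, h2, h3, h4, h5⟩
  exact ⟨n, q, h1, h2, h3, h4, h5.trans h⟩

/-- At high input power, points differing only in phase become arbitrarily close
in adversarial distance: `d(x, x e^{iφ}) → 0` as `|x| → ∞`. -/
theorem adist_phase_high_power (γ L : ℝ) (hγ : γ ≠ 0) (hL : 0 < L)
    (φ : ℝ) (hφ : φ ∈ Set.Ico (-Real.pi) Real.pi) :
    ∀ ε : ℝ, 0 < ε → ∃ ρ : ℝ, ∀ x : ℂ, ρ < ‖x‖ →
      adist γ L x (x * Complex.exp (Complex.I * (φ:ℂ))) < ε := by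
  intro ε hε
  set δ : ℝ := 6 * φ / (γ * L^3) with hδdef
  set S : ℝ := |δ| * L^2 + δ^2 * L^3 / ε with hSdef
  have hS0 : 0 ≤ S := by
    rw [hSdef]
    have h1 : 0 ≤ |δ| * L^2 := by positivity
    have h2 : 0 ≤ δ^2 * L^3 / ε := by positivity
    linarith
  refine ⟨Real.sqrt S + 1, fun x hx => ?_⟩
  set a : ℝ := ‖x‖ with hadef
  have ha1 : 1 < a := by
    have := Real.sqrt_nonneg S
    linarith
  have ha0 : 0 < a := by linarith
  have hx0 : x ≠ 0 := by
    intro h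
    rw [hadef, h] at ha1
    simp only [norm_zero] at ha1
    linarith
  have haS : S < a^2 := by
    have h1 : Real.sqrt S < a := by have := Real.sqrt_nonneg S; linarith
    calc S = Real.sqrt S ^ 2 := (Real.sq_sqrt hS0).symm
    _ < a^2 := by nlinarith [Real.sqrt_nonneg S]
  have hδa : |δ| * L^2 < a^2 := by
    have h2 : 0 ≤ δ^2 * L^3 / ε := by positivity
    rw [hSdef] at haS
    linarith
  -- first trajectory
  have h1 := reach γ L hL x hx0 δ hδa
  -- second trajectory: zero noise from x * exp(Iφ)
  set x' : ℂ := x * Complex.exp (Complex.I * (φ:ℂ)) with hx'def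
  have hx'norm : ‖x'‖ = a := by
    rw [hx'def, norm_mul, norm_exp_I_mul_real, hadef, mul_one]
  have hx'0 : x' ≠ 0 := by
    rw [hx'def]
    exact mul_ne_zero hx0 (Complex.exp_ne_zero _)
  have hδa' : |(0:ℝ)| * L^2 < ‖x'‖^2 := by
    rw [hx'norm]
    simp
    positivity
  have h2 := reach γ L hL x' hx'0 0 hδa'
  -- energy level
  set E : ℝ := δ^2 * L^3 / (2 * a^2) with hEdef
  have hE0 : 0 ≤ E := by rw [hEdef]; positivity
  have hE2 : (0:ℝ)^2 * L^3 / (2 * ‖x'‖^2) ≤ E := by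
    rw [hx'norm]
    simp
    exact hE0
  have h2' := noiseBall_mono γ L x' hE2 h2
  -- the two reached points coincide
  have hδφ : γ * δ * L^3 / 6 = φ := by
    rw [hδdef]
    field_simp
  have hpt : x * Complex.exp (Complex.I * ((γ * (‖x‖^2 * L) + γ * δ * L^3 / 6 : ℝ) : ℂ)) =
      x' * Complex.exp (Complex.I * ((γ * (‖x'‖^2 * L) + γ * (0:ℝ) * L^3 / 6 : ℝ) : ℂ)) := by
    rw [hx'norm, hδφ, hx'def, ← hadef]
    push_cast
    rw [show (Complex.I * ((γ:ℂ) * ((a:ℂ)^2 * L) + φ)) =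
      Complex.I * (φ:ℂ) + Complex.I * ((γ:ℂ) * ((a:ℂ)^2 * L) + γ * 0 * (L:ℂ)^3 / 6) by ring,
      Complex.exp_add]
    ring
  rw [← hadef] at h1
  rw [hpt] at h1
  -- intersection nonempty at level E
  have hne : (noiseBall γ L x E ∩ noiseBall γ L x' E).Nonempty := ⟨_, h1, h2'⟩
  have hmem : E ∈ {E' | 0 ≤ E' ∧ (noiseBall γ L x E' ∩ noiseBall γ L x' E').Nonempty} :=
    ⟨hE0, hne⟩
  have hbdd : BddBelow {E' | 0 ≤ E' ∧ (noiseBall γ L x E' ∩ noiseBall γ L x' E').Nonempty} :=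
    ⟨0, fun E' hE' => hE'.1⟩
  have hle : adist γ L x x' ≤ E := csInf_le hbdd hmem
  have hEε : E < ε := by
    have hkey : δ^2 * L^3 / ε < a^2 := by
      have hpos : 0 ≤ |δ| * L^2 := by positivity
      rw [hSdef] at haS
      linarith
    rw [div_lt_iff₀ hε] at hkey
    rw [hEdef, div_lt_iff₀ (by positivity)]
    nlinarith [mul_nonneg (sq_nonneg a) hε.le]
  calc adist γ L x x' ≤ E := hle
  _ < ε := hEε
end
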